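/- arXiv:1210.5001 — 2 statements merged into one kernel-verified Lean document; each statement's English description precedes it below -/
import Mathlib

section
/- Let f : ℤ_2 → ℤ_2 be a measure-preserving 1-Lipschitz function that is transitive modulo 2^n for some n ≥ 1. Then f is transitive modulo 2^{n+1} if and only if S_n := Σ_{m=0}^{2^n−1} f_{mn} is odd, where f_{mn} denotes the n-th binary digit of f(m). -/
open MeasureTheory Finset

namespace VDP

noncomputable instance (p : ℕ) [Fact p.Prime] : MeasurableSpace ℤ_[p] := borel _
instance (p : ℕ) [Fact p.Prime] : BorelSpace ℤ_[p] := ⟨rfl⟩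

/-- The Haar probability measure on `ℤ_[p]`. -/
noncomputable def haarZp (p : ℕ) [Fact p.Prime] : Measure ℤ_[p] :=
  Measure.addHaarMeasure ⊤

/-- `f` is 1-Lipschitz. -/
def IsLip (p : ℕ) [Fact p.Prime] (f : ℤ_[p] → ℤ_[p]) : Prop :=
  ∀ x y : ℤ_[p], ‖f x - f y‖ ≤ ‖x - y‖

/-- The van der Put basis function `χ(m, x)` on `ℤ_[p]` (with `⌊log_p 0⌋ = 0`). -/
noncomputable def chi (p : ℕ) [Fact p.Prime] (m : ℕ) (x : ℤ_[p]) : ℤ_[p] :=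
  if ‖x - (m : ℤ_[p])‖ ≤ ((p : ℝ) ^ (Nat.log p m + 1))⁻¹ then 1 else 0

/-- `q(m) = m_s p^s`, the leading term of the `p`-adic expansion of `m`. -/
def q (p m : ℕ) : ℕ := m / p ^ Nat.log p m * p ^ Nat.log p m

/-- `f` has van der Put expansion with coefficients `B`. -/
def vdpExpansion (p : ℕ) [Fact p.Prime] (f : ℤ_[p] → ℤ_[p]) (B : ℕ → ℤ_[p]) : Prop :=
  ∀ x, f x = ∑' m, B m * chi p m x

/-- `f` is bijective modulo `p^n`. -/
def BijModPow (p : ℕ) [Fact p.Prime] (f : ℤ_[p] → ℤ_[p]) (n : ℕ) : Prop :=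
  Function.Bijective fun a : ZMod (p ^ n) => PadicInt.toZModPow n (f ((a.val : ℕ) : ℤ_[p]))

/-- `f` is transitive modulo `p^n`. -/
def TransModPow (p : ℕ) [Fact p.Prime] (f : ℤ_[p] → ℤ_[p]) (n : ℕ) : Prop :=
  ∀ x : ℤ_[p], ∀ a : ZMod (p ^ n), ∃ k : ℕ, PadicInt.toZModPow n (f^[k] x) = a

/-- The `i`-th digit of the canonical `p`-adic expansion of `x`. -/
noncomputable def digit (p : ℕ) [Fact p.Prime] (x : ℤ_[p]) (i : ℕ) : ℕ :=
  x.appr (i + 1) / p ^ i % p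

end VDP

namespace VDPaux
open VDP PadicInt MeasureTheory
open scoped ENNReal


set_option linter.unusedSectionVars false

variable {α : Type*} [Fintype α] [DecidableEq α]

lemma exists_period (F : α → α) (hinj : Function.Injective F) (a : α) :
    ∃ p, 0 < p ∧ F^[p] a = a := by
  obtain ⟨i, j, hne, hij⟩ := Fintype.exists_ne_map_eq_of_card_lt
    (fun k : Fin (Fintype.card α + 1) => F^[(k : ℕ)] a) (by simp)
  rcases lt_or_gt_of_ne hne with h | h
  · refine ⟨j - i, by omega, ?_⟩
    have : F^[(i : ℕ)] (F^[(j : ℕ) - i] a) = F^[(i : ℕ)] a := by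
      rw [← Function.iterate_add_apply, Nat.add_sub_cancel' h.le]; exact hij.symm
    exact (hinj.iterate (i : ℕ)) this
  · refine ⟨i - j, by omega, ?_⟩
    have : F^[(j : ℕ)] (F^[(i : ℕ) - j] a) = F^[(j : ℕ)] a := by
      rw [← Function.iterate_add_apply, Nat.add_sub_cancel' h.le]; exact hij
    exact (hinj.iterate (j : ℕ)) this

lemma orbit_structure (F : α → α) (hbij : Function.Bijective F) (a : α)
    (hsurj : ∀ b, ∃ k, F^[k] a = b) :
    F^[Fintype.card α] a = a ∧
    (∀ i j, i < Fintype.card α → j < Fintype.card α → F^[i] a = F^[j] a → i = j) ∧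
    (∀ b, ∃ k < Fintype.card α, F^[k] a = b) := by
  have hex : ∃ p, 0 < p ∧ F^[p] a = a := exists_period F hbij.injective a
  set Q := Nat.find hex with hQdef
  obtain ⟨hQ0, hQa⟩ := Nat.find_spec hex
  have hper : ∀ k, F^[k + Q] a = F^[k] a := fun k => by
    rw [Function.iterate_add_apply, hQa]
  have hmod : ∀ k, F^[k] a = F^[k % Q] a := by
    intro k
    induction k using Nat.strong_induction_on with
    | _ k ih =>
      rcases lt_or_ge k Q with h | h
      · rw [Nat.mod_eq_of_lt h]
      · have hk : (k - Q) + Q = k := by omega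
        calc F^[k] a = F^[(k - Q) + Q] a := by rw [hk]
        _ = F^[k - Q] a := hper _
        _ = F^[(k - Q) % Q] a := ih _ (by omega)
        _ = F^[k % Q] a := by rw [← Nat.mod_eq_sub_mod h]
  -- injectivity on [0, Q)
  have hinjQ : ∀ i j, i < Q → j < Q → F^[i] a = F^[j] a → i = j := by
    intro i j hi hj hij
    by_contra hne
    wlog h : i < j generalizing i j
    · exact this j i hj hi hij.symm (Ne.symm hne) (by omega)
    have : F^[i] (F^[j - i] a) = F^[i] a := by
      rw [← Function.iterate_add_apply, Nat.add_sub_cancel' h.le]; exact hij.symm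
    have h2 : F^[j - i] a = a := (hbij.injective.iterate i) this
    exact Nat.find_min hex (m := j - i) (by omega) ⟨by omega, h2⟩
  -- surjectivity within [0, Q)
  have hsurjQ : ∀ b, ∃ k < Q, F^[k] a = b := by
    intro b
    obtain ⟨k, hk⟩ := hsurj b
    exact ⟨k % Q, Nat.mod_lt _ hQ0, by rw [← hmod]; exact hk⟩
  -- Q = card α
  have hle : Q ≤ Fintype.card α := by
    have : Function.Injective (fun i : Fin Q => F^[(i : ℕ)] a) := by
      intro i j hij
      exact Fin.ext (hinjQ _ _ i.isLt j.isLt hij)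
    simpa using Fintype.card_le_of_injective _ this
  have hge : Fintype.card α ≤ Q := by
    have : Function.Surjective (fun i : Fin Q => F^[(i : ℕ)] a) := by
      intro b
      obtain ⟨k, hk, hkb⟩ := hsurjQ b
      exact ⟨⟨k, hk⟩, hkb⟩
    simpa using Fintype.card_le_of_surjective _ this
  have hQcard : Q = Fintype.card α := le_antisymm hle hge
  refine ⟨by rw [← hQcard]; exact hQa, by rw [← hQcard]; exact hinjQ, by rw [← hQcard]; exact hsurjQ⟩


open VDP PadicInt

instance instNeZeroPow (k : ℕ) : NeZero (2 ^ k) := ⟨pow_ne_zero k two_ne_zero⟩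

/-- The induced map on `ZMod (2^k)`. -/
noncomputable def Gk (f : ℤ_[2] → ℤ_[2]) (k : ℕ) : ZMod (2 ^ k) → ZMod (2 ^ k) :=
  fun a => toZModPow k (f ((a.val : ℕ) : ℤ_[2]))

lemma toZModPow_eq_iff (k : ℕ) (x y : ℤ_[2]) :
    toZModPow k x = toZModPow k y ↔ ‖x - y‖ ≤ ((2 : ℕ) : ℝ) ^ (-(k : ℤ)) := by
  rw [← sub_eq_zero, ← map_sub, ← RingHom.mem_ker, ker_toZModPow,
    ← PadicInt.norm_le_pow_iff_mem_span_pow]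

lemma toZModPow_natCast (k m : ℕ) : toZModPow k ((m : ℕ) : ℤ_[2]) = (m : ZMod (2 ^ k)) :=
  map_natCast _ m

lemma toZModPow_val (k : ℕ) (a : ZMod (2 ^ k)) : toZModPow k ((a.val : ℕ) : ℤ_[2]) = a := by
  rw [toZModPow_natCast, ZMod.natCast_val, ZMod.cast_id]

lemma Gk_compat (f : ℤ_[2] → ℤ_[2]) (hf : IsLip 2 f) (k : ℕ) (x : ℤ_[2]) :
    Gk f k (toZModPow k x) = toZModPow k (f x) := by
  unfold Gk
  rw [toZModPow_eq_iff]
  refine le_trans (hf _ _) ?_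
  rw [← toZModPow_eq_iff]
  exact toZModPow_val k _

lemma Gk_iterate (f : ℤ_[2] → ℤ_[2]) (hf : IsLip 2 f) (k j : ℕ) (x : ℤ_[2]) :
    toZModPow k (f^[j] x) = (Gk f k)^[j] (toZModPow k x) := by
  induction j with
  | zero => rfl
  | succ j ih =>
    rw [Function.iterate_succ_apply', Function.iterate_succ_apply', ← ih, Gk_compat f hf]

lemma transModPow_iff (f : ℤ_[2] → ℤ_[2]) (hf : IsLip 2 f) (k : ℕ) :
    TransModPow 2 f k ↔ ∀ a b : ZMod (2 ^ k), ∃ j, (Gk f k)^[j] a = b := by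
  constructor
  · intro h a b
    obtain ⟨j, hj⟩ := h ((a.val : ℕ) : ℤ_[2]) b
    rw [Gk_iterate f hf, toZModPow_val] at hj
    exact ⟨j, hj⟩
  · intro h x a
    obtain ⟨j, hj⟩ := h (toZModPow k x) a
    exact ⟨j, by rw [Gk_iterate f hf]; exact hj⟩

/-- Level compatibility. -/
lemma Gk_proj (f : ℤ_[2] → ℤ_[2]) (hf : IsLip 2 f) (n : ℕ) (x : ZMod (2 ^ (n + 1))) :
    ZMod.castHom (pow_dvd_pow 2 (Nat.le_succ n)) (ZMod (2 ^ n)) (Gk f (n + 1) x) =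
      Gk f n (ZMod.castHom (pow_dvd_pow 2 (Nat.le_succ n)) (ZMod (2 ^ n)) x) := by
  have h1 : ∀ y : ℤ_[2], ZMod.castHom (pow_dvd_pow 2 (Nat.le_succ n)) (ZMod (2 ^ n))
      (toZModPow (n+1) y) = toZModPow n y := fun y =>
    RingHom.congr_fun (zmod_cast_comp_toZModPow n (n+1) (Nat.le_succ n)) y
  rw [show Gk f (n+1) x = toZModPow (n+1) (f ((x.val : ℕ) : ℤ_[2])) from rfl, h1]
  have h2 : toZModPow n ((x.val : ℕ) : ℤ_[2]) =
      ZMod.castHom (pow_dvd_pow 2 (Nat.le_succ n)) (ZMod (2 ^ n)) x := by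
    rw [toZModPow_natCast, ZMod.castHom_apply, ZMod.natCast_val]
  rw [← h2, ← Gk_compat f hf]

/-- digit identification -/
lemma digit_eq (f : ℤ_[2] → ℤ_[2]) (n m : ℕ) (hm : m < 2 ^ n) :
    digit 2 (f (m : ℤ_[2])) n = (Gk f (n + 1) ((m : ℕ) : ZMod (2 ^ (n + 1)))).val / 2 ^ n := by
  have hm1 : m < 2 ^ (n + 1) := lt_of_lt_of_le hm (Nat.pow_le_pow_right (by norm_num) (Nat.le_succ n))
  have hval : (((m : ℕ) : ZMod (2 ^ (n + 1)))).val = m := ZMod.val_natCast_of_lt hm1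
  have : Gk f (n + 1) ((m : ℕ) : ZMod (2 ^ (n + 1))) =
      (((f (m : ℤ_[2])).appr (n + 1) : ℕ) : ZMod (2 ^ (n + 1))) := by
    unfold Gk; rw [hval]; rfl
  rw [this, ZMod.val_natCast_of_lt (PadicInt.appr_lt _ _)]
  unfold digit
  have hlt : (f (m : ℤ_[2])).appr (n + 1) / 2 ^ n < 2 := by
    apply Nat.div_lt_of_lt_mul
    have := PadicInt.appr_lt (f (m : ℤ_[2])) (n + 1)
    calc (f (m : ℤ_[2])).appr (n + 1) < 2 ^ (n + 1) := this
    _ = 2 ^ n * 2 := by ring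
  rw [Nat.mod_eq_of_lt hlt]


-- residue sets
def S (k : ℕ) (a : ZMod (2 ^ k)) : Set ℤ_[2] := toZModPow k ⁻¹' {a}

lemma S_eq_ball (k : ℕ) (a : ZMod (2 ^ k)) :
    S k a = Metric.closedBall ((a.val : ℕ) : ℤ_[2]) (((2 : ℕ) : ℝ) ^ (-(k : ℤ))) := by
  ext x
  simp only [S, Set.mem_preimage, Set.mem_singleton_iff, Metric.mem_closedBall, dist_eq_norm]
  have h := toZModPow_eq_iff k x ((a.val : ℕ) : ℤ_[2])
  rw [toZModPow_val] at h
  exact h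

lemma measurableSet_S (k : ℕ) (a : ZMod (2 ^ k)) : MeasurableSet (S k a) := by
  rw [S_eq_ball]; exact measurableSet_closedBall

lemma measure_S_eq (k : ℕ) (a : ZMod (2 ^ k)) : haarZp 2 (S k a) = haarZp 2 (S k 0) := by
  have : S k a = (fun x => (-((a.val : ℕ) : ℤ_[2])) + x) ⁻¹' (S k 0) := by
    ext x
    simp only [S, Set.mem_preimage, Set.mem_singleton_iff, map_add, map_neg, toZModPow_val]
    rw [neg_add_eq_zero, eq_comm]
  rw [this]
  haveI : (haarZp 2).IsAddLeftInvariant := by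
    unfold haarZp; infer_instance
  exact measure_preimage_add _ _ _

lemma measure_univ_eq_one : haarZp 2 (Set.univ : Set ℤ_[2]) = 1 := by
  have : ((⊤ : TopologicalSpace.PositiveCompacts ℤ_[2]) : Set ℤ_[2]) = Set.univ := rfl
  rw [haarZp, ← this]
  exact Measure.addHaarMeasure_self

lemma iUnion_S (k : ℕ) : (⋃ a : ZMod (2 ^ k), S k a) = Set.univ := by
  ext x
  simp only [Set.mem_iUnion, Set.mem_univ, iff_true]
  exact ⟨toZModPow k x, rfl⟩

lemma disjoint_S (k : ℕ) : Pairwise (Function.onFun Disjoint (S k)) := by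
  intro a b hab
  refine Set.disjoint_left.mpr ?_
  intro x hxa hxb
  exact hab (hxa.symm.trans hxb)

lemma measure_S (k : ℕ) (a : ZMod (2 ^ k)) :
    haarZp 2 (S k a) = ((2 : ℝ≥0∞) ^ k)⁻¹ := by
  have hsum : ∑ b : ZMod (2 ^ k), haarZp 2 (S k b) = 1 := by
    rw [← tsum_fintype (L := SummationFilter.unconditional _), ← measure_iUnion (disjoint_S k) (measurableSet_S k), iUnion_S,
      measure_univ_eq_one]
  have hconst : ∀ b : ZMod (2 ^ k), haarZp 2 (S k b) = haarZp 2 (S k 0) :=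
    fun b => measure_S_eq k b
  rw [Finset.sum_congr rfl (fun b _ => hconst b), Finset.sum_const] at hsum
  have hcard : (Finset.univ : Finset (ZMod (2 ^ k))).card = 2 ^ k := by
    simp [ZMod.card]
  rw [hcard, nsmul_eq_mul] at hsum
  have h2 : ((2 : ℝ≥0∞) ^ k) ≠ 0 := by positivity
  have h2' : ((2 : ℝ≥0∞) ^ k) ≠ ⊤ := by
    exact ENNReal.pow_ne_top (by norm_num)
  have : ((2 ^ k : ℕ) : ℝ≥0∞) = (2 : ℝ≥0∞) ^ k := by push_cast; ring
  rw [this] at hsum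
  rw [measure_S_eq k a]
  calc haarZp 2 (S k 0) = ((2:ℝ≥0∞)^k)⁻¹ * ((2:ℝ≥0∞)^k * haarZp 2 (S k 0)) := by
        rw [← mul_assoc, ENNReal.inv_mul_cancel h2 h2', one_mul]
  _ = ((2:ℝ≥0∞)^k)⁻¹ := by rw [hsum, mul_one]

open scoped Classical in
lemma preimage_S (f : ℤ_[2] → ℤ_[2]) (hf : IsLip 2 f) (k : ℕ) (a : ZMod (2 ^ k)) :
    f ⁻¹' S k a = ⋃ m ∈ Finset.univ.filter (fun m => Gk f k m = a), S k m := by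
  ext x
  simp only [Set.mem_preimage, Set.mem_iUnion, Finset.mem_filter, Finset.mem_univ, true_and]
  constructor
  · intro h
    refine ⟨toZModPow k x, ?_, rfl⟩
    rw [Gk_compat f hf]; exact h
  · rintro ⟨m, hm, hx⟩
    have : toZModPow k x = m := hx
    show toZModPow k (f x) ∈ ({a} : Set _)
    rw [← Gk_compat f hf, this, hm]; exact rfl

open scoped Classical in
lemma Gk_bijective (f : ℤ_[2] → ℤ_[2]) (hf : IsLip 2 f)
    (hmp : MeasurePreserving f (haarZp 2) (haarZp 2)) (k : ℕ) :
    Function.Bijective (Gk f k) := by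
  rw [Function.bijective_iff_existsUnique]
  intro a
  have hpre := hmp.measure_preimage (s := S k a) (measurableSet_S k a).nullMeasurableSet
  rw [preimage_S f hf k a] at hpre
  rw [measure_biUnion_finset ?hd (fun m _ => measurableSet_S k m)] at hpre
  case hd =>
    intro m hm m' hm' hne
    exact disjoint_S k hne
  have : ∀ m ∈ Finset.univ.filter (fun m => Gk f k m = a), haarZp 2 (S k m) = ((2:ℝ≥0∞)^k)⁻¹ :=
    fun m _ => measure_S k m
  rw [Finset.sum_congr rfl this, Finset.sum_const, nsmul_eq_mul, measure_S k a] at hpre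
  have h2 : ((2 : ℝ≥0∞) ^ k)⁻¹ ≠ 0 := by
    simp [ENNReal.pow_ne_top]
  have h2' : ((2 : ℝ≥0∞) ^ k)⁻¹ ≠ ⊤ := by
    simp
  have hcard : ((Finset.univ.filter (fun m => Gk f k m = a)).card : ℝ≥0∞) = 1 := by
    exact (ENNReal.mul_left_inj h2 h2').mp (by rw [hpre, one_mul])
  have hcard' : (Finset.univ.filter (fun m => Gk f k m = a)).card = 1 := by
    exact_mod_cast hcard
  obtain ⟨m, hm⟩ := Finset.card_eq_one.mp hcard'
  refine ⟨m, ?_, ?_⟩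
  · have : m ∈ Finset.univ.filter (fun m => Gk f k m = a) := by rw [hm]; exact Finset.mem_singleton_self m
    exact (Finset.mem_filter.mp this).2
  · intro y hy
    have : y ∈ Finset.univ.filter (fun m => Gk f k m = a) := by
      simp [hy]
    rw [hm, Finset.mem_singleton] at this
    exact this


lemma iterate_mod {β : Type*} (F : β → β) (a : β) (P : ℕ) (hP : 0 < P)
    (hPa : F^[P] a = a) : ∀ k, F^[k] a = F^[k % P] a := by
  intro k
  induction k using Nat.strong_induction_on with
  | _ k ih =>
    rcases lt_or_ge k P with h | h
    · rw [Nat.mod_eq_of_lt h]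
    · have hk : (k - P) + P = k := by omega
      calc F^[k] a = F^[(k - P) + P] a := by rw [hk]
      _ = F^[k - P] (F^[P] a) := by rw [Function.iterate_add_apply]
      _ = F^[k - P] a := by rw [hPa]
      _ = F^[(k - P) % P] a := ih _ (by omega)
      _ = F^[k % P] a := by rw [← Nat.mod_eq_sub_mod h]

section Level

variable (n : ℕ)

/-- projection from level `n+1` to level `n`. -/
abbrev projn : ZMod (2 ^ (n + 1)) →+* ZMod (2 ^ n) :=
  ZMod.castHom (pow_dvd_pow 2 (Nat.le_succ n)) (ZMod (2 ^ n))

/-- the element `2^n` of `ZMod (2^(n+1))`. -/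
def Nm : ZMod (2 ^ (n + 1)) := ((2 ^ n : ℕ) : ZMod (2 ^ (n + 1)))

/-- the top bit. -/
def topb (z : ZMod (2 ^ (n + 1))) : ℕ := z.val / 2 ^ n

/-- the bottom lift. -/
def lft (b : ZMod (2 ^ n)) : ZMod (2 ^ (n + 1)) := ((b.val : ℕ) : ZMod (2 ^ (n + 1)))

lemma pow_succ_eq : 2 ^ (n + 1) = 2 ^ n + 2 ^ n := by rw [pow_succ]; ring

lemma projn_apply (z : ZMod (2 ^ (n + 1))) : projn n z = ((z.val : ℕ) : ZMod (2 ^ n)) := by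
  rw [ZMod.castHom_apply, ZMod.natCast_val]

lemma natCast_val_self (z : ZMod (2 ^ (n + 1))) : ((z.val : ℕ) : ZMod (2 ^ (n + 1))) = z := by
  rw [ZMod.natCast_val, ZMod.cast_id]

lemma val_Nm : (Nm n).val = 2 ^ n :=
  ZMod.val_natCast_of_lt (by have := pow_succ_eq n; have := Nat.pow_pos (n := n) (by norm_num : 0 < 2); omega)

lemma Nm_ne_zero : Nm n ≠ 0 := by
  intro h
  have := val_Nm n
  rw [h, ZMod.val_zero] at this
  exact (Nat.pow_pos (n := n) (by norm_num : 0 < 2)).ne this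

lemma Nm_add_Nm : Nm n + Nm n = 0 := by
  rw [Nm, ← Nat.cast_add, ← pow_succ_eq, ZMod.natCast_self]

lemma projn_Nm : projn n (Nm n) = 0 := by
  rw [Nm, map_natCast, ZMod.natCast_self]

lemma fiber_zero (z : ZMod (2 ^ (n + 1))) (hz : projn n z = 0) : z = 0 ∨ z = Nm n := by
  have hv : z.val < 2 ^ (n + 1) := ZMod.val_lt z
  have hdvd : (2 ^ n : ℕ) ∣ z.val := by
    rw [projn_apply] at hz
    exact (ZMod.natCast_eq_zero_iff _ _).mp hz
  have hA : 0 < 2 ^ n := Nat.pow_pos (n := n) (by norm_num)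
  have hMA := pow_succ_eq n
  obtain ⟨c, hc⟩ := hdvd
  have hc1 : c ≤ 1 := by nlinarith
  have hcast := natCast_val_self n z
  interval_cases c
  · left; rw [← hcast, hc]; simp
  · right; rw [← hcast, hc, mul_one]; rfl

lemma topb_zero : topb n 0 = 0 := by
  rw [topb, ZMod.val_zero, Nat.zero_div]

lemma topb_Nm : topb n (Nm n) = 1 := by
  rw [topb, val_Nm, Nat.div_self (Nat.pow_pos (n := n) (by norm_num))]

lemma topb_le_one (z : ZMod (2 ^ (n + 1))) : topb n z ≤ 1 := by
  have hv : z.val < 2 ^ (n + 1) := ZMod.val_lt z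
  have hMA := pow_succ_eq n
  have hA : 0 < 2 ^ n := Nat.pow_pos (n := n) (by norm_num)
  rw [topb]
  have : z.val / 2 ^ n < 2 := Nat.div_lt_of_lt_mul (by omega)
  omega

lemma decomp (z : ZMod (2 ^ (n + 1))) :
    (topb n z = 0 ∧ z = lft n (projn n z)) ∨
    (topb n z = 1 ∧ z = lft n (projn n z) + Nm n) := by
  have hv : z.val < 2 ^ (n + 1) := ZMod.val_lt z
  have hA : 0 < 2 ^ n := Nat.pow_pos (n := n) (by norm_num)
  have hMA := pow_succ_eq n
  have hval : (projn n z).val = z.val % 2 ^ n := by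
    rw [projn_apply, ZMod.val_natCast]
  rcases lt_or_ge z.val (2 ^ n) with h | h
  · left
    constructor
    · rw [topb, Nat.div_eq_of_lt h]
    · rw [lft, hval, Nat.mod_eq_of_lt h, natCast_val_self]
  · right
    constructor
    · rw [topb]
      exact Nat.div_eq_of_lt_le (by omega) (by omega)
    · rw [lft, hval]
      have hm : z.val % 2 ^ n = z.val - 2 ^ n := by
        rw [Nat.mod_eq_sub_mod h, Nat.mod_eq_of_lt (by omega)]
      rw [hm, Nm, ← Nat.cast_add, Nat.sub_add_cancel h, natCast_val_self]

end Level

lemma topb_add_Nm (n : ℕ) (z : ZMod (2 ^ (n + 1))) : topb n (z + Nm n) = 1 - topb n z := by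
  have hv : z.val < 2 ^ (n + 1) := ZMod.val_lt z
  have hA : 0 < 2 ^ n := Nat.pow_pos (n := n) (by norm_num)
  have hMA := pow_succ_eq n
  have hval : (z + Nm n).val = (z.val + 2 ^ n) % 2 ^ (n + 1) := by
    rw [ZMod.val_add, val_Nm]
  rcases lt_or_ge z.val (2 ^ n) with h | h
  · have h1 : (z + Nm n).val = z.val + 2 ^ n := by
      rw [hval]; exact Nat.mod_eq_of_lt (by omega)
    have l : topb n (z + Nm n) = 1 := by
      rw [topb, h1]; exact Nat.div_eq_of_lt_le (by omega) (by omega)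
    have r : topb n z = 0 := by rw [topb]; exact Nat.div_eq_of_lt h
    rw [l, r]
  · have e : z.val + 2 ^ n - 2 ^ (n + 1) = z.val - 2 ^ n := by omega
    have h1 : (z + Nm n).val = z.val - 2 ^ n := by
      rw [hval, Nat.mod_eq_sub_mod (by omega), e, Nat.mod_eq_of_lt (by omega)]
    have l : topb n (z + Nm n) = 0 := by
      rw [topb, h1]; exact Nat.div_eq_of_lt (by omega)
    have r : topb n z = 1 := by
      rw [topb]; exact Nat.div_eq_of_lt_le (by omega) (by omega)
    rw [l, r]

lemma Gk_shift (f : ℤ_[2] → ℤ_[2]) (hf : IsLip 2 f)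
    (hmp : MeasurePreserving f (haarZp 2) (haarZp 2)) (n : ℕ) (x : ZMod (2 ^ (n + 1))) :
    Gk f (n + 1) (x + Nm n) = Gk f (n + 1) x + Nm n := by
  have hbij := Gk_bijective f hf hmp (n + 1)
  have h1 : projn n (Gk f (n + 1) (x + Nm n) - Gk f (n + 1) x) = 0 := by
    rw [map_sub, Gk_proj f hf, Gk_proj f hf, map_add, projn_Nm, add_zero, sub_self]
  rcases fiber_zero n _ h1 with h | h
  · exfalso
    have h2 := sub_eq_zero.mp h
    have hx := hbij.injective h2
    exact Nm_ne_zero n (by rwa [add_eq_left] at hx)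
  · rw [sub_eq_iff_eq_add] at h
    rw [h]; exact add_comm _ _

lemma Gk_shift_iter (f : ℤ_[2] → ℤ_[2]) (hf : IsLip 2 f)
    (hmp : MeasurePreserving f (haarZp 2) (haarZp 2)) (n k : ℕ) (x : ZMod (2 ^ (n + 1))) :
    (Gk f (n + 1))^[k] (x + Nm n) = (Gk f (n + 1))^[k] x + Nm n := by
  induction k with
  | zero => rfl
  | succ k ih => rw [Function.iterate_succ_apply', Function.iterate_succ_apply', ih, Gk_shift f hf hmp]

lemma Gk_proj_iter (f : ℤ_[2] → ℤ_[2]) (hf : IsLip 2 f) (n k : ℕ) (x : ZMod (2 ^ (n + 1))) :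
    projn n ((Gk f (n + 1))^[k] x) = (Gk f n)^[k] (projn n x) := by
  induction k with
  | zero => rfl
  | succ k ih => rw [Function.iterate_succ_apply', Function.iterate_succ_apply', ← ih, Gk_proj f hf]

end VDPaux

open VDP MeasureTheory Finset in
theorem stmt15 (f : ℤ_[2] → ℤ_[2]) (hf : IsLip 2 f)
    (hmp : MeasurePreserving f (haarZp 2) (haarZp 2))
    (n : ℕ) (hn : 1 ≤ n) (ht : TransModPow 2 f n) :
    TransModPow 2 f (n + 1) ↔
      Odd (∑ m ∈ Finset.range (2 ^ n), digit 2 (f (m : ℤ_[2])) n) := by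
  classical
  set A := 2 ^ n with hA_def
  have hA : 0 < A := Nat.pow_pos (n := n) (by norm_num)
  set G := VDPaux.Gk f (n + 1) with hG
  set F := VDPaux.Gk f n with hF
  have hGbij := VDPaux.Gk_bijective f hf hmp (n + 1)
  have hFbij := VDPaux.Gk_bijective f hf hmp n
  have hFtr : ∀ a b : ZMod (2 ^ n), ∃ j, F^[j] a = b :=
    (VDPaux.transModPow_iff f hf n).mp ht
  have hcardn : Fintype.card (ZMod (2 ^ n)) = A := ZMod.card _
  obtain ⟨hFN, hFinj, hFsurj⟩ := VDPaux.orbit_structure F hFbij 0 (fun b => hFtr 0 b)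
  rw [hcardn] at hFN hFinj hFsurj
  have hGshift : ∀ x, G (x + VDPaux.Nm n) = G x + VDPaux.Nm n :=
    VDPaux.Gk_shift f hf hmp n
  have hGshift_iter : ∀ k x, G^[k] (x + VDPaux.Nm n) = G^[k] x + VDPaux.Nm n :=
    VDPaux.Gk_shift_iter f hf hmp n
  have hGproj_iter : ∀ k (x : ZMod (2 ^ (n + 1))),
      VDPaux.projn n (G^[k] x) = F^[k] (VDPaux.projn n x) :=
    VDPaux.Gk_proj_iter f hf n
  set d : ZMod (2 ^ n) → ℕ := fun b => VDPaux.topb n (G (VDPaux.lft n b)) with hd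
  have hdle : ∀ b, d b ≤ 1 := fun b => VDPaux.topb_le_one n _
  -- step recursion for the top bit
  have hstep : ∀ k, VDPaux.topb n (G^[k + 1] 0) =
      (VDPaux.topb n (G^[k] 0) + d (VDPaux.projn n (G^[k] 0))) % 2 := by
    intro k
    rcases VDPaux.decomp n (G^[k] 0) with ⟨h0, he⟩ | ⟨h1, he⟩
    · rw [Function.iterate_succ_apply']
      conv_lhs => rw [he]
      rw [h0, zero_add, Nat.mod_eq_of_lt (by have := hdle (VDPaux.projn n (G^[k] 0)); omega)]
    · rw [Function.iterate_succ_apply']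
      conv_lhs => rw [he]
      rw [hGshift _, VDPaux.topb_add_Nm, h1]
      have he2 : VDPaux.topb n (G (VDPaux.lft n (VDPaux.projn n (G^[k] 0)))) =
          d (VDPaux.projn n (G^[k] 0)) := rfl
      rw [he2]
      have := hdle (VDPaux.projn n (G^[k] 0))
      omega
  have hrec : ∀ k, VDPaux.topb n (G^[k] 0) = (∑ j ∈ Finset.range k, d (F^[j] 0)) % 2 := by
    intro k
    induction k with
    | zero => simpa using VDPaux.topb_zero n
    | succ k ih =>
      rw [hstep k, ih, Nat.mod_add_mod, Finset.sum_range_succ]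
      congr 2
      rw [hGproj_iter k 0, map_zero]
  -- sum reindexing
  have hsum1 : ∑ j ∈ Finset.range A, d (F^[j] 0) = ∑ b : ZMod (2 ^ n), d b := by
    have hinj : ∀ x ∈ Finset.range A, ∀ y ∈ Finset.range A,
        F^[x] (0 : ZMod (2 ^ n)) = F^[y] 0 → x = y := by
      intro x hx y hy hxy
      exact hFinj x y (Finset.mem_range.mp hx) (Finset.mem_range.mp hy) hxy
    have himg : (Finset.range A).image (fun j => F^[j] 0) = Finset.univ := by
      apply Finset.eq_univ_of_card
      rw [Finset.card_image_of_injOn hinj, Finset.card_range, hcardn]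
    calc ∑ j ∈ Finset.range A, d (F^[j] 0)
        = ∑ b ∈ (Finset.range A).image (fun j => F^[j] 0), d b := (Finset.sum_image hinj).symm
    _ = ∑ b : ZMod (2 ^ n), d b := by rw [himg]
  have hsum2 : ∑ b : ZMod (2 ^ n), d b = ∑ m ∈ Finset.range A, d ((m : ZMod (2 ^ n))) := by
    have hinj : ∀ x ∈ Finset.range A, ∀ y ∈ Finset.range A,
        ((x : ZMod (2 ^ n))) = (y : ZMod (2 ^ n)) → x = y := by
      intro x hx y hy hxy
      have := congrArg ZMod.val hxy
      rwa [ZMod.val_natCast_of_lt (Finset.mem_range.mp hx),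
        ZMod.val_natCast_of_lt (Finset.mem_range.mp hy)] at this
    have himg : (Finset.range A).image (Nat.cast : ℕ → ZMod (2 ^ n)) = Finset.univ := by
      apply Finset.eq_univ_of_card
      rw [Finset.card_image_of_injOn hinj, Finset.card_range, hcardn]
    calc ∑ b : ZMod (2 ^ n), d b
        = ∑ b ∈ (Finset.range A).image (Nat.cast : ℕ → ZMod (2 ^ n)), d b := by rw [himg]
    _ = ∑ m ∈ Finset.range A, d ((m : ZMod (2 ^ n))) := Finset.sum_image hinj
  have hsum3 : ∀ m ∈ Finset.range A, d ((m : ZMod (2 ^ n))) = digit 2 (f (m : ℤ_[2])) n := by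
    intro m hm
    have hm' := Finset.mem_range.mp hm
    rw [VDPaux.digit_eq f n m hm']
    have hl : VDPaux.lft n ((m : ZMod (2 ^ n))) = ((m : ℕ) : ZMod (2 ^ (n + 1))) := by
      rw [VDPaux.lft, ZMod.val_natCast_of_lt hm']
    show VDPaux.topb n (G (VDPaux.lft n ((m : ZMod (2 ^ n))))) = _
    rw [hl]
    rfl
  have htA : VDPaux.topb n (G^[A] 0) =
      (∑ m ∈ Finset.range A, digit 2 (f (m : ℤ_[2])) n) % 2 := by
    rw [hrec A, hsum1, hsum2, Finset.sum_congr rfl hsum3]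
  have hGA : G^[A] 0 = 0 ∨ G^[A] 0 = VDPaux.Nm n := by
    apply VDPaux.fiber_zero
    rw [hGproj_iter A 0, map_zero, hFN]
  rw [VDPaux.transModPow_iff f hf (n + 1)]
  constructor
  · intro htrans
    rw [Nat.odd_iff, ← htA]
    rcases hGA with h | h
    · exfalso
      have hper : ∀ k, G^[k] 0 = G^[k % A] 0 := VDPaux.iterate_mod G 0 A hA h
      have hne : (Finset.range A).image (fun k => G^[k] 0) ≠ Finset.univ := by
        intro heq
        have h1 : ((Finset.range A).image (fun k => G^[k] 0)).card ≤ A :=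
          le_trans Finset.card_image_le (by rw [Finset.card_range])
        rw [heq, Finset.card_univ, ZMod.card] at h1
        have := VDPaux.pow_succ_eq n
        omega
      have hbex : ∃ b : ZMod (2 ^ (n + 1)), b ∉ (Finset.range A).image (fun k => G^[k] 0) := by
        by_contra hall
        push_neg at hall
        exact hne (Finset.eq_univ_iff_forall.mpr hall)
      obtain ⟨b, hb⟩ := hbex
      obtain ⟨j, hj⟩ := htrans 0 b
      apply hb
      rw [hper j] at hj
      exact Finset.mem_image.mpr ⟨j % A, Finset.mem_range.mpr (Nat.mod_lt _ hA), hj⟩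
    · rw [h, VDPaux.topb_Nm]
  · intro hodd a b
    have h : G^[A] 0 = VDPaux.Nm n := by
      rcases hGA with h | h
      · exfalso
        rw [Nat.odd_iff, ← htA, h, VDPaux.topb_zero] at hodd
        exact zero_ne_one hodd
      · exact h
    have h2A : G^[A + A] 0 = 0 := by
      rw [Function.iterate_add_apply, h]
      have e : VDPaux.Nm n = 0 + VDPaux.Nm n := (zero_add _).symm
      rw [e, hGshift_iter A 0, h, VDPaux.Nm_add_Nm]
    have hGinj : ∀ i j, i < A + A → j < A + A → G^[i] 0 = G^[j] 0 → i = j := by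
      intro i j hi hj hij
      have e1 := hGproj_iter i (0 : ZMod (2 ^ (n + 1)))
      have e2 := hGproj_iter j (0 : ZMod (2 ^ (n + 1)))
      rw [map_zero] at e1 e2
      have hproj : F^[i] (0 : ZMod (2 ^ n)) = F^[j] 0 := by
        rw [← e1, ← e2, hij]
      have hmodeq : i % A = j % A := by
        apply hFinj _ _ (Nat.mod_lt _ hA) (Nat.mod_lt _ hA)
        rw [← VDPaux.iterate_mod F 0 A hA hFN i, ← VDPaux.iterate_mod F 0 A hA hFN j, hproj]
      have htri : i = j ∨ i + A = j ∨ j + A = i := by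
        rcases le_total i j with hle | hle
        · have hdvd : A ∣ j - i := (Nat.modEq_iff_dvd' hle).mp hmodeq
          obtain ⟨c, hc⟩ := hdvd
          have hc2 : c < 2 := by
            by_contra hge
            push_neg at hge
            have : 2 * A ≤ A * c := by nlinarith
            omega
          interval_cases c <;> omega
        · have hdvd : A ∣ i - j := (Nat.modEq_iff_dvd' hle).mp hmodeq.symm
          obtain ⟨c, hc⟩ := hdvd
          have hc2 : c < 2 := by
            by_contra hge
            push_neg at hge
            have : 2 * A ≤ A * c := by nlinarith
            omega
          interval_cases c <;> omega
      rcases htri with h' | h' | h'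
      · exact h'
      · exfalso
        have : G^[j] 0 = G^[i] 0 + VDPaux.Nm n := by
          rw [← h', Function.iterate_add_apply, h]
          have e : VDPaux.Nm n = 0 + VDPaux.Nm n := (zero_add _).symm
          rw [e, hGshift_iter i 0, ← e]
        rw [this, left_eq_add] at hij
        exact absurd hij (VDPaux.Nm_ne_zero n)
      · exfalso
        have : G^[i] 0 = G^[j] 0 + VDPaux.Nm n := by
          rw [← h', Function.iterate_add_apply, h]
          have e : VDPaux.Nm n = 0 + VDPaux.Nm n := (zero_add _).symm
          rw [e, hGshift_iter j 0, ← e]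
        rw [this, add_eq_left] at hij
        exact absurd hij (VDPaux.Nm_ne_zero n)
    have horb : ∀ c : ZMod (2 ^ (n + 1)), ∃ j < A + A, G^[j] 0 = c := by
      intro c
      have hinj2 : ∀ x ∈ Finset.range (A + A), ∀ y ∈ Finset.range (A + A),
          G^[x] (0 : ZMod (2 ^ (n + 1))) = G^[y] 0 → x = y := by
        intro x hx y hy
        exact hGinj x y (Finset.mem_range.mp hx) (Finset.mem_range.mp hy)
      have himg : (Finset.range (A + A)).image (fun k => G^[k] 0) = Finset.univ := by
        apply Finset.eq_univ_of_card
        rw [Finset.card_image_of_injOn hinj2, Finset.card_range, ZMod.card]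
        have := VDPaux.pow_succ_eq n
        omega
      have hc : c ∈ (Finset.range (A + A)).image (fun k => G^[k] 0) := by
        rw [himg]; exact Finset.mem_univ c
      obtain ⟨j, hj, hjc⟩ := Finset.mem_image.mp hc
      exact ⟨j, Finset.mem_range.mp hj, hjc⟩
    obtain ⟨i, hi, hia⟩ := horb a
    obtain ⟨j, hj, hjb⟩ := horb b
    refine ⟨j + (A + A) - i, ?_⟩
    have hk : (j + (A + A) - i) + i = j + (A + A) := by omega
    calc G^[j + (A + A) - i] a = G^[j + (A + A) - i] (G^[i] 0) := by rw [hia]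
    _ = G^[(j + (A + A) - i) + i] 0 := (Function.iterate_add_apply G _ i 0).symm
    _ = G^[j + (A + A)] 0 := by rw [hk]
    _ = G^[j] (G^[A + A] 0) := Function.iterate_add_apply G j (A + A) 0
    _ = G^[j] 0 := by rw [h2A]
    _ = b := hjb
end

section
/- A 1-Lipschitz function f : ℤ_2 → ℤ_2 is measure-preserving if and only if it has the form f(x) = d + x + 2g(x) for some d ∈ ℤ_2 and some 1-Lipschitz g : ℤ_2 → ℤ_2; and f is ergodic if and only if it has the form f(x) = 1 + x + 2(g(x+1) − g(x)) for some 1-Lipschitz g : ℤ_2 → ℤ_2. -/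
open MeasureTheory Finset
open scoped ENNReal

open VDP MeasureTheory in

open MeasureTheory Finset
open scoped ENNReal

namespace S17
/-- reduction mod 2^n -/
noncomputable def pr (n : ℕ) : ℤ_[2] →+* ZMod (2 ^ n) := PadicInt.toZModPow n

lemma pr_eq_iff {n : ℕ} {x y : ℤ_[2]} : pr n x = pr n y ↔ (2:ℤ_[2])^n ∣ x - y := by
  rw [← sub_eq_zero, ← map_sub, ← RingHom.mem_ker, pr, PadicInt.ker_toZModPow,
    Ideal.mem_span_singleton]
  norm_num

lemma norm_le_iff_dvd (x : ℤ_[2]) (n : ℕ) : ‖x‖ ≤ (2:ℝ)^(-(n:ℤ)) ↔ (2:ℤ_[2])^n ∣ x := by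
  have := PadicInt.norm_le_pow_iff_mem_span_pow (p := 2) x n
  rw [Ideal.mem_span_singleton] at this
  rw [show ((2:ℕ):ℝ) = (2:ℝ) by norm_num] at this
  rw [this]
  norm_num

lemma lip_dvd {f : ℤ_[2] → ℤ_[2]} (hf : VDP.IsLip 2 f) :
    ∀ (n : ℕ) (x y : ℤ_[2]), (2:ℤ_[2])^n ∣ x - y → (2:ℤ_[2])^n ∣ f x - f y := by
  intro n x y h
  rw [← norm_le_iff_dvd] at h ⊢
  exact le_trans (hf x y) h

lemma exists_exact_pow {x : ℤ_[2]} (hx : x ≠ 0) :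
    ∃ m : ℕ, ‖x‖ = (2:ℝ)^(-(m:ℤ)) ∧ (2:ℤ_[2])^m ∣ x ∧ ¬ (2:ℤ_[2])^(m+1) ∣ x := by
  have hval := PadicInt.norm_eq_zpow_neg_valuation hx
  generalize x.valuation = m at hval
  refine ⟨m, ?_, ?_, ?_⟩
  · rw [hval]; norm_num
  · rw [← norm_le_iff_dvd, hval]; norm_num
  · rw [← norm_le_iff_dvd, hval]
    push_cast
    rw [not_le]
    apply zpow_lt_zpow_right₀ (by norm_num)
    omega

lemma dvd_lip {f : ℤ_[2] → ℤ_[2]}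
    (h : ∀ (n : ℕ) (x y : ℤ_[2]), (2:ℤ_[2])^n ∣ x - y → (2:ℤ_[2])^n ∣ f x - f y) :
    VDP.IsLip 2 f := by
  intro x y
  rcases eq_or_ne x y with rfl | hxy
  · simp
  · obtain ⟨m, hm, hdvd, -⟩ := exists_exact_pow (sub_ne_zero.2 hxy)
    rw [hm, norm_le_iff_dvd]
    exact h m x y hdvd

/-- two elements exactly divisible by 2^n differ by a multiple of 2^(n+1) -/
lemma key2adic {n : ℕ} {a b : ℤ_[2]} (ha : (2:ℤ_[2])^n ∣ a) (hb : (2:ℤ_[2])^n ∣ b)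
    (ha' : ¬ (2:ℤ_[2])^(n+1) ∣ a) (hb' : ¬ (2:ℤ_[2])^(n+1) ∣ b) :
    (2:ℤ_[2])^(n+1) ∣ a - b := by
  obtain ⟨a', rfl⟩ := ha
  obtain ⟨b', rfl⟩ := hb
  have h2 : (2:ℤ_[2])^n ≠ 0 := pow_ne_zero _ two_ne_zero
  rw [pow_succ, mul_dvd_mul_iff_left h2] at ha' hb'
  rw [← mul_sub, pow_succ, mul_dvd_mul_iff_left h2]
  have hker : ∀ z : ℤ_[2], PadicInt.toZMod z = 0 ↔ (2:ℤ_[2]) ∣ z := by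
    intro z
    rw [← RingHom.mem_ker, PadicInt.ker_toZMod, PadicInt.maximalIdeal_eq_span_p,
      Ideal.mem_span_singleton]
    norm_num
  rw [← hker, map_sub, sub_eq_zero]
  rw [← hker] at ha' hb'
  have h01 : ∀ z : ZMod 2, z ≠ 0 → z = 1 := by decide
  rw [h01 _ ha', h01 _ hb']


section Fbar
variable (f : ℤ_[2] → ℤ_[2])

/-- the induced map modulo 2^n -/
noncomputable def fbar (n : ℕ) : ZMod (2^n) → ZMod (2^n) :=
  fun a => pr n (f ((a.val : ℕ) : ℤ_[2]))

lemma pr_natCast_val {n : ℕ} (a : ZMod (2^n)) : pr n ((a.val : ℕ) : ℤ_[2]) = a := by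
  rw [map_natCast, ZMod.natCast_zmod_val]

variable {f}

lemma fbar_pr {n : ℕ} (hf : VDP.IsLip 2 f) (x : ℤ_[2]) :
    pr n (f x) = fbar f n (pr n x) := by
  rw [fbar, pr_eq_iff]
  apply lip_dvd hf
  rw [← pr_eq_iff, pr_natCast_val]

lemma fbar_iter {n : ℕ} (hf : VDP.IsLip 2 f) (k : ℕ) (x : ℤ_[2]) :
    pr n (f^[k] x) = (fbar f n)^[k] (pr n x) := by
  induction k with
  | zero => simp
  | succ k ih =>
    rw [Function.iterate_succ_apply', Function.iterate_succ_apply', fbar_pr hf, ih]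

end Fbar

/-- the fiber of `pr n` over `a`, i.e. the ball of radius `2^{-n}` -/
def fiber (n : ℕ) (a : ZMod (2^n)) : Set ℤ_[2] := pr n ⁻¹' {a}

lemma mem_fiber {n : ℕ} {a : ZMod (2^n)} {x : ℤ_[2]} : x ∈ fiber n a ↔ pr n x = a :=
  Iff.rfl

lemma self_mem_fiber {n : ℕ} (x : ℤ_[2]) : x ∈ fiber n (pr n x) := rfl

lemma fiber_eq_ball (n : ℕ) (a : ZMod (2^n)) :
    fiber n a = Metric.closedBall ((a.val : ℕ) : ℤ_[2]) ((2:ℝ)^(-(n:ℤ))) := by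
  ext x
  rw [Metric.mem_closedBall, dist_eq_norm, norm_le_iff_dvd, mem_fiber, ← pr_eq_iff,
    pr_natCast_val]

lemma isClosed_fiber (n : ℕ) (a : ZMod (2^n)) : IsClosed (fiber n a) := by
  rw [fiber_eq_ball]; exact Metric.isClosed_closedBall

lemma measurableSet_fiber (n : ℕ) (a : ZMod (2^n)) : MeasurableSet (fiber n a) :=
  (isClosed_fiber n a).measurableSet

lemma isOpen_fiber (n : ℕ) (a : ZMod (2^n)) : IsOpen (fiber n a) := by
  rw [Metric.isOpen_iff]
  intro x hx
  refine ⟨(2:ℝ)^(-(n:ℤ)), by positivity, fun y hy => ?_⟩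
  rw [Metric.mem_ball, dist_eq_norm] at hy
  rw [mem_fiber, ← hx, pr_eq_iff, ← norm_le_iff_dvd]
  exact hy.le

/-- the collection of all fibers -/
def Cyl : Set (Set ℤ_[2]) := {s | ∃ (n : ℕ) (a : ZMod (2^n)), s = fiber n a}

lemma isPi_Cyl : IsPiSystem Cyl := by
  have haux : ∀ (n m : ℕ) (a : ZMod (2^n)) (b : ZMod (2^m)), n ≤ m →
      ∀ x ∈ fiber n a ∩ fiber m b, fiber n a ∩ fiber m b = fiber m b := by
    rintro n m a b hnm x ⟨hx1, hx2⟩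
    apply Set.inter_eq_self_of_subset_right
    intro y hy
    rw [mem_fiber] at *
    rw [← hx1, pr_eq_iff]
    exact dvd_trans (pow_dvd_pow 2 hnm) (pr_eq_iff.1 (hy.trans hx2.symm))
  rintro s ⟨n, a, rfl⟩ t ⟨m, b, rfl⟩ ⟨x, hx⟩
  rcases le_total n m with h | h
  · rw [haux n m a b h x hx]; exact ⟨m, b, rfl⟩
  · rw [Set.inter_comm] at hx ⊢
    rw [haux m n b a h x hx]; exact ⟨n, a, rfl⟩

lemma isBasis_Cyl : TopologicalSpace.IsTopologicalBasis Cyl := by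
  apply TopologicalSpace.isTopologicalBasis_of_isOpen_of_nhds
  · rintro u ⟨n, a, rfl⟩; exact isOpen_fiber n a
  · intro x u hxu hu
    obtain ⟨ε, hε, hball⟩ := Metric.isOpen_iff.1 hu x hxu
    obtain ⟨k, hk⟩ := PadicInt.exists_pow_neg_lt 2 hε
    refine ⟨fiber k (pr k x), ⟨k, _, rfl⟩, self_mem_fiber x, fun y hy => hball ?_⟩
    rw [Metric.mem_ball, dist_eq_norm]
    calc ‖y - x‖ ≤ (2:ℝ)^(-(k:ℤ)) := (norm_le_iff_dvd _ _).2 (pr_eq_iff.1 hy)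
    _ < ε := by exact_mod_cast hk

lemma generateFrom_Cyl :
    (inferInstance : MeasurableSpace ℤ_[2]) = MeasurableSpace.generateFrom Cyl :=
  BorelSpace.measurable_eq.trans isBasis_Cyl.borel_eq_generateFrom


noncomputable def μ2 : Measure ℤ_[2] := VDP.haarZp 2

instance : (μ2).IsAddLeftInvariant :=
  inferInstanceAs (Measure.addHaarMeasure ⊤ : Measure ℤ_[2]).IsAddLeftInvariant

instance : IsProbabilityMeasure μ2 := by
  constructor
  have := Measure.addHaarMeasure_self (K₀ := (⊤ : TopologicalSpace.PositiveCompacts ℤ_[2]))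
  simpa [μ2, VDP.haarZp] using this

lemma measure_fiber_eq (n : ℕ) (a b : ZMod (2^n)) : μ2 (fiber n a) = μ2 (fiber n b) := by
  have : fiber n a = (fun x => (((b.val : ℕ) : ℤ_[2]) - ((a.val : ℕ) : ℤ_[2])) + x) ⁻¹' fiber n b := by
    ext x
    simp only [Set.mem_preimage, mem_fiber, map_add, map_sub, pr_natCast_val]
    constructor
    · rintro rfl; ring
    · intro h
      linear_combination h
  rw [this, measure_preimage_add]

lemma measure_fiber (n : ℕ) (a : ZMod (2^n)) : μ2 (fiber n a) = ((2:ℝ≥0∞)^n)⁻¹ := by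
  have hcover : (⋃ b : ZMod (2^n), fiber n b) = Set.univ :=
    Set.eq_univ_of_forall (fun x => Set.mem_iUnion.2 ⟨pr n x, self_mem_fiber x⟩)
  have hdisj : Pairwise (Function.onFun Disjoint (fun b : ZMod (2^n) => fiber n b)) := by
    intro b c hbc
    apply Set.disjoint_left.2
    intro x hb hc
    exact hbc (hb.symm.trans hc)
  have hsum : ∑' b : ZMod (2^n), μ2 (fiber n b) = 1 := by
    rw [← measure_iUnion hdisj (fun b => measurableSet_fiber n b), hcover, measure_univ]
  rw [tsum_fintype] at hsum
  have hconst : ∀ b : ZMod (2^n), μ2 (fiber n b) = μ2 (fiber n a) :=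
    fun b => measure_fiber_eq n b a
  rw [Finset.sum_congr rfl (fun b _ => hconst b), Finset.sum_const, Finset.card_univ,
    ZMod.card, nsmul_eq_mul] at hsum
  have h2 : ((2:ℝ≥0∞)^n) ≠ 0 := by positivity
  have h2' : ((2:ℝ≥0∞)^n) ≠ ⊤ := by
    exact ENNReal.pow_ne_top (by norm_num)
  calc μ2 (fiber n a) = ((2:ℝ≥0∞)^n)⁻¹ * ((2^n : ℝ≥0∞) * μ2 (fiber n a)) := by
        rw [← mul_assoc, ENNReal.inv_mul_cancel h2 h2', one_mul]
  _ = ((2:ℝ≥0∞)^n)⁻¹ := by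
        rw [show ((2^n:ℕ):ℝ≥0∞) = (2:ℝ≥0∞)^n by push_cast; ring] at hsum
        rw [hsum, mul_one]

lemma measure_fiber_ne_zero (n : ℕ) (a : ZMod (2^n)) : μ2 (fiber n a) ≠ 0 := by
  rw [measure_fiber]
  exact ENNReal.inv_ne_zero.2 (ENNReal.pow_ne_top (by norm_num))

/-- extensionality on fibers -/
lemma ext_on_fibers {ν₁ ν₂ : Measure ℤ_[2]} [IsFiniteMeasure ν₁]
    (h : ∀ (n : ℕ) (a : ZMod (2^n)), ν₁ (fiber n a) = ν₂ (fiber n a))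
    (hu : ν₁ Set.univ = ν₂ Set.univ) : ν₁ = ν₂ := by
  refine MeasureTheory.ext_of_generate_finite Cyl generateFrom_Cyl isPi_Cyl ?_ hu
  rintro s ⟨n, a, rfl⟩
  exact h n a


section MP
variable {f : ℤ_[2] → ℤ_[2]}

lemma lip_continuous (hf : VDP.IsLip 2 f) : Continuous f := by
  have : LipschitzWith 1 f := by
    apply LipschitzWith.of_dist_le_mul
    intro x y
    rw [dist_eq_norm, dist_eq_norm, NNReal.coe_one, one_mul]
    exact hf x y
  exact this.continuous

lemma preimage_fiber (hf : VDP.IsLip 2 f) {n : ℕ} (hbij : Function.Bijective (fbar f n))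
    {a b : ZMod (2^n)} (hb : fbar f n b = a) : f ⁻¹' fiber n a = fiber n b := by
  ext x
  simp only [Set.mem_preimage, mem_fiber, fbar_pr hf]
  constructor
  · intro h; exact hbij.1 (h.trans hb.symm)
  · intro h; rw [h, hb]

/-- bijectivity mod all powers implies measure preserving -/
lemma bij_to_mp (hf : VDP.IsLip 2 f) (hbij : ∀ n, Function.Bijective (fbar f n)) :
    MeasurePreserving f μ2 μ2 := by
  have hmeas : Measurable f := (lip_continuous hf).measurable
  refine ⟨hmeas, ?_⟩
  haveI : IsFiniteMeasure (Measure.map f μ2) := by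
    constructor
    rw [Measure.map_apply hmeas MeasurableSet.univ]
    simp
  apply ext_on_fibers
  · intro n a
    obtain ⟨b, hb⟩ := (hbij n).2 a
    rw [Measure.map_apply hmeas (measurableSet_fiber n a), preimage_fiber hf (hbij n) hb,
      measure_fiber, measure_fiber]
  · rw [Measure.map_apply hmeas MeasurableSet.univ]; simp

lemma mp_to_bij (hf : VDP.IsLip 2 f) (hmp : MeasurePreserving f μ2 μ2) :
    ∀ n, Function.Bijective (fbar f n) := by
  intro n
  rw [Fintype.bijective_iff_injective_and_card]
  refine ⟨?_, rfl⟩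
  intro a b hab
  by_contra hne
  have hdisj : Disjoint (fiber n a) (fiber n b) := by
    apply Set.disjoint_left.2
    intro x hxa hxb
    exact hne (hxa.symm.trans hxb)
  have hsub : fiber n a ∪ fiber n b ⊆ f ⁻¹' fiber n (fbar f n a) := by
    rintro x (hx | hx) <;> rw [Set.mem_preimage, mem_fiber, fbar_pr hf, hx]
    exact hab.symm
  have hle : μ2 (fiber n a) + μ2 (fiber n b) ≤ μ2 (fiber n (fbar f n a)) := by
    rw [← measure_union hdisj (measurableSet_fiber n b)]
    calc μ2 (fiber n a ∪ fiber n b) ≤ μ2 (f ⁻¹' fiber n (fbar f n a)) := measure_mono hsub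
    _ = μ2 (fiber n (fbar f n a)) := hmp.measure_preimage (measurableSet_fiber _ _).nullMeasurableSet
  rw [measure_fiber, measure_fiber, measure_fiber] at hle
  have h2 : ((2:ℝ≥0∞)^n)⁻¹ ≠ 0 := ENNReal.inv_ne_zero.2 (ENNReal.pow_ne_top (by norm_num))
  have h2' : ((2:ℝ≥0∞)^n)⁻¹ ≠ ⊤ := by
    simp only [ne_eq, ENNReal.inv_eq_top]
    positivity
  nth_rewrite 3 [← add_zero (((2:ℝ≥0∞)^n)⁻¹)] at hle
  rw [ENNReal.add_le_add_iff_left h2'] at hle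
  exact h2 (le_antisymm hle zero_le)

/-- the conjunction form ↔ bijectivity mod all powers -/
lemma form_to_bij (hf : VDP.IsLip 2 f) {d : ℤ_[2]} {g : ℤ_[2] → ℤ_[2]} (hg : VDP.IsLip 2 g)
    (hform : ∀ x, f x = d + x + 2 * g x) : ∀ n, Function.Bijective (fbar f n) := by
  have hconv : ∀ (n : ℕ) (x y : ℤ_[2]), (2:ℤ_[2])^n ∣ f x - f y → (2:ℤ_[2])^n ∣ x - y := by
    intro n x y hdvd
    by_contra hnd
    have hne : x - y ≠ 0 := fun h => hnd (h ▸ dvd_zero _)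
    obtain ⟨m, -, hm1, hm2⟩ := exists_exact_pow hne
    have hmn : m + 1 ≤ n := by
      by_contra hc
      exact hnd (dvd_trans (pow_dvd_pow 2 (by omega)) hm1)
    have h1 : (2:ℤ_[2])^(m+1) ∣ 2 * (g x - g y) := by
      rw [pow_succ, mul_comm]
      exact mul_dvd_mul_left 2 (lip_dvd hg m x y hm1)
    have h2 : (2:ℤ_[2])^(m+1) ∣ f x - f y := dvd_trans (pow_dvd_pow 2 hmn) hdvd
    apply hm2
    have : x - y = (f x - f y) - 2 * (g x - g y) := by
      rw [hform x, hform y]; ring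
    rw [this]
    exact dvd_sub h2 h1
  intro n
  rw [Fintype.bijective_iff_injective_and_card]
  refine ⟨?_, rfl⟩
  intro a b hab
  have := hconv n _ _ (pr_eq_iff.1 hab)
  rw [← pr_eq_iff, pr_natCast_val, pr_natCast_val] at this
  exact this

lemma bij_to_form (hf : VDP.IsLip 2 f) (hbij : ∀ n, Function.Bijective (fbar f n)) :
    ∃ (d : ℤ_[2]) (g : ℤ_[2] → ℤ_[2]), VDP.IsLip 2 g ∧ ∀ x, f x = d + x + 2 * g x := by
  have hconv : ∀ (n : ℕ) (x y : ℤ_[2]), (2:ℤ_[2])^n ∣ f x - f y → (2:ℤ_[2])^n ∣ x - y := by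
    intro n x y hdvd
    rw [← pr_eq_iff] at hdvd ⊢
    rw [fbar_pr hf, fbar_pr hf] at hdvd
    exact (hbij n).1 hdvd
  have hkey : ∀ (n : ℕ) (x y : ℤ_[2]), (2:ℤ_[2])^n ∣ x - y →
      (2:ℤ_[2])^(n+1) ∣ (f x - f y) - (x - y) := by
    intro n x y hxy
    by_cases hc : (2:ℤ_[2])^(n+1) ∣ x - y
    · exact dvd_sub (lip_dvd hf (n+1) x y hc) hc
    · refine key2adic (lip_dvd hf n x y hxy) hxy ?_ hc
      intro hcon
      exact hc (hconv (n+1) x y hcon)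
  have hdvd2 : ∀ x : ℤ_[2], (2:ℤ_[2]) ∣ f x - x - f 0 := by
    intro x
    have h := hkey 0 x 0 (by rw [pow_zero]; exact one_dvd _)
    have heq : f x - x - f 0 = (f x - f 0) - (x - 0) := by ring
    rw [heq]
    calc (2:ℤ_[2]) = 2^(0+1) := by norm_num
    _ ∣ _ := h
  choose g hgspec using fun x => hdvd2 x
  refine ⟨f 0, g, ?_, ?_⟩
  · apply dvd_lip
    intro n x y hxy
    have h1 : (2:ℤ_[2])^(n+1) ∣ 2 * (g x - g y) := by
      have : 2 * (g x - g y) = (f x - f y) - (x - y) := by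
        have e1 := hgspec x
        have e2 := hgspec y
        rw [mul_sub, ← e1, ← e2]
        ring
      rw [this]
      exact hkey n x y hxy
    rw [pow_succ, mul_comm ((2:ℤ_[2])^n) 2, mul_dvd_mul_iff_left (two_ne_zero' ℤ_[2])] at h1
    exact h1
  · intro x
    have := hgspec x
    rw [← this]
    ring

end MP


section Erg
variable {f : ℤ_[2] → ℤ_[2]}

lemma pr_toZModPow (n : ℕ) (x : ℤ_[2]) : PadicInt.toZModPow (p := 2) n x = pr n x := rfl

lemma trans_sigma (hf : VDP.IsLip 2 f) {n : ℕ} (htrans : VDP.TransModPow 2 f n) :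
    ∀ a b : ZMod (2^n), ∃ k, (fbar f n)^[k] a = b := by
  intro a b
  obtain ⟨k, hk⟩ := htrans ((a.val : ℕ) : ℤ_[2]) b
  refine ⟨k, ?_⟩
  rw [pr_toZModPow, fbar_iter hf, pr_natCast_val] at hk
  exact hk

lemma trans_to_bij (hf : VDP.IsLip 2 f) (htrans : ∀ n, VDP.TransModPow 2 f n) :
    ∀ n, Function.Bijective (fbar f n) := by
  intro n
  rw [Fintype.bijective_iff_surjective_and_card]
  refine ⟨?_, rfl⟩
  intro a
  obtain ⟨k, hk⟩ := htrans n (f 0) a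
  refine ⟨(fbar f n)^[k] (pr n 0), ?_⟩
  rw [pr_toZModPow, ← Function.iterate_succ_apply, Function.iterate_succ_apply',
    fbar_pr hf, fbar_iter hf] at hk
  exact hk

lemma ergodic_to_trans (hf : VDP.IsLip 2 f) (herg : Ergodic f μ2) :
    ∀ n, VDP.TransModPow 2 f n := by
  have hbij := mp_to_bij hf herg.toMeasurePreserving
  intro n
  have htsig : ∀ a b : ZMod (2^n), ∃ k, (fbar f n)^[k] a = b := by
    by_contra hcon
    push_neg at hcon
    obtain ⟨a, b, hab⟩ := hcon
    set σ := fbar f n with hσ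
    set O : Set (ZMod (2^n)) := {c | ∃ k, σ^[k] a = c} with hO
    have haO : a ∈ O := ⟨0, rfl⟩
    have hbO : b ∉ O := fun ⟨k, hk⟩ => hab k hk
    have himg : σ '' O ⊆ O := by
      rintro _ ⟨c, ⟨k, rfl⟩, rfl⟩
      exact ⟨k+1, Function.iterate_succ_apply' σ k a⟩
    have heq : σ '' O = O :=
      Set.eq_of_subset_of_ncard_le himg
        (le_of_eq (Set.ncard_image_of_injective O (hbij n).1).symm) (Set.toFinite O)
    have hpre : σ ⁻¹' O = O := by
      ext c
      constructor
      · intro hc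
        rw [Set.mem_preimage, ← heq] at hc
        obtain ⟨y, hy, hyc⟩ := hc
        rwa [← (hbij n).1 hyc]
      · intro hc
        rw [Set.mem_preimage, ← heq]
        exact ⟨c, hc, rfl⟩
    set S := pr n ⁻¹' O with hS
    have hSmeas : MeasurableSet S := by
      have : S = ⋃ c ∈ O, fiber n c := by
        ext x
        simp only [hS, Set.mem_preimage, Set.mem_iUnion, mem_fiber]
        exact ⟨fun h => ⟨pr n x, h, rfl⟩, fun ⟨c, hc, hx⟩ => hx ▸ hc⟩
      rw [this]
      exact (Set.toFinite O).measurableSet_biUnion fun c _ => measurableSet_fiber n c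
    have hSinv : f ⁻¹' S = S := by
      ext x
      simp only [hS, Set.mem_preimage]
      rw [fbar_pr hf]
      exact Set.ext_iff.1 hpre (pr n x)
    rcases herg.ae_empty_or_univ hSmeas hSinv with h | h
    · have h0 : μ2 S = 0 := ae_eq_empty.mp h
      have hmono : μ2 (fiber n a) ≤ μ2 S := by
        apply measure_mono
        intro x hx
        show pr n x ∈ O
        rw [mem_fiber.1 hx]
        exact haO
      exact measure_fiber_ne_zero n a (le_antisymm (h0 ▸ hmono) zero_le)
    · have h1 : μ2 Sᶜ = 0 := ae_eq_univ.mp h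
      have hmono : μ2 (fiber n b) ≤ μ2 Sᶜ := by
        apply measure_mono
        intro x hx hxS
        exact hbO (mem_fiber.1 hx ▸ hxS)
      exact measure_fiber_ne_zero n b (le_antisymm (h1 ▸ hmono) zero_le)
  intro x a
  obtain ⟨k, hk⟩ := htsig (pr n x) a
  exact ⟨k, by rw [pr_toZModPow, fbar_iter hf]; exact hk⟩

lemma trans_to_ergodic (hf : VDP.IsLip 2 f) (htrans : ∀ n, VDP.TransModPow 2 f n) :
    Ergodic f μ2 := by
  have hbij := trans_to_bij hf htrans
  have hmp := bij_to_mp hf hbij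
  refine ⟨hmp, ⟨fun s hs hinv => ?_⟩⟩
  set ν := μ2.restrict s with hνdef
  have hν : ∀ t : Set ℤ_[2], MeasurableSet t → ν (f ⁻¹' t) = ν t := by
    intro t ht
    rw [hνdef, Measure.restrict_apply (hmp.measurable ht), Measure.restrict_apply ht]
    conv_lhs => rw [← hinv, ← Set.preimage_inter]
    exact hmp.measure_preimage (ht.inter hs).nullMeasurableSet
  have hfib : ∀ (n : ℕ) (c : ZMod (2^n)), ν (fiber n c) = ν (fiber n (fbar f n c)) := by
    intro n c
    rw [← hν (fiber n (fbar f n c)) (measurableSet_fiber _ _),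
      preimage_fiber hf (hbij n) rfl]
  have hiter : ∀ (n : ℕ) (c : ZMod (2^n)) (k : ℕ),
      ν (fiber n c) = ν (fiber n ((fbar f n)^[k] c)) := by
    intro n c k
    induction k with
    | zero => rfl
    | succ k ih => rw [Function.iterate_succ_apply', ← hfib, ← ih]
  have hall : ∀ (n : ℕ) (a b : ZMod (2^n)), ν (fiber n a) = ν (fiber n b) := by
    intro n a b
    obtain ⟨k, hk⟩ := trans_sigma hf (htrans n) a b
    rw [hiter n a k, hk]
  have hsum : ∀ (n : ℕ) (a : ZMod (2^n)), (2:ℝ≥0∞)^n * ν (fiber n a) = μ2 s := by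
    intro n a
    have hcover : (⋃ b : ZMod (2^n), fiber n b) = Set.univ :=
      Set.eq_univ_of_forall (fun x => Set.mem_iUnion.2 ⟨pr n x, self_mem_fiber x⟩)
    have hdisj : Pairwise (Function.onFun Disjoint (fun b : ZMod (2^n) => fiber n b)) := by
      intro b c hbc
      apply Set.disjoint_left.2
      intro x hb hc
      exact hbc (hb.symm.trans hc)
    have h1 : ∑' b : ZMod (2^n), ν (fiber n b) = ν Set.univ := by
      rw [← measure_iUnion hdisj (fun b => measurableSet_fiber n b), hcover]
    rw [tsum_fintype, Finset.sum_congr rfl (fun b _ => hall n b a), Finset.sum_const,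
      Finset.card_univ, ZMod.card, nsmul_eq_mul] at h1
    rw [hνdef, Measure.restrict_apply_univ] at h1
    rw [show ((2^n:ℕ):ℝ≥0∞) = (2:ℝ≥0∞)^n by push_cast; ring] at h1
    exact h1
  have h2 : ∀ n : ℕ, ((2:ℝ≥0∞)^n) ≠ 0 := fun n => by positivity
  have h2' : ∀ n : ℕ, ((2:ℝ≥0∞)^n) ≠ ⊤ := fun n => ENNReal.pow_ne_top (by norm_num)
  have hext : ν = (μ2 s) • μ2 := by
    apply ext_on_fibers
    · intro n a
      rw [Measure.smul_apply, smul_eq_mul, measure_fiber]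
      calc ν (fiber n a) = ((2:ℝ≥0∞)^n)⁻¹ * ((2:ℝ≥0∞)^n * ν (fiber n a)) := by
            rw [← mul_assoc, ENNReal.inv_mul_cancel (h2 n) (h2' n), one_mul]
      _ = ((2:ℝ≥0∞)^n)⁻¹ * μ2 s := by rw [hsum n a]
      _ = μ2 s * ((2:ℝ≥0∞)^n)⁻¹ := mul_comm _ _
    · rw [hνdef, Measure.restrict_apply_univ, Measure.smul_apply, smul_eq_mul, measure_univ,
        mul_one]
  have heval : μ2 s = μ2 s * μ2 s := by
    have := congrArg (fun m : Measure ℤ_[2] => m s) hext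
    simp only [Measure.smul_apply, smul_eq_mul] at this
    rw [hνdef, Measure.restrict_apply_self] at this
    exact this
  rw [Filter.eventuallyConst_set']
  rcases eq_or_ne (μ2 s) 0 with h0 | h0
  · left
    exact ae_eq_empty.2 h0
  · right
    have hs1 : μ2 s = 1 := by
      have hne : μ2 s ≠ ⊤ := measure_ne_top _ _
      have h3 : (μ2 s)⁻¹ * (μ2 s * 1) = (μ2 s)⁻¹ * (μ2 s * μ2 s) := by
        rw [mul_one, ← heval]
      rw [← mul_assoc, ← mul_assoc, ENNReal.inv_mul_cancel h0 hne, one_mul, one_mul] at h3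
      exact h3.symm
    rw [ae_eq_univ]
    rw [prob_compl_eq_one_sub hs, hs1, tsub_self]

end Erg


section Orbit
variable {α : Type*} [Fintype α] [DecidableEq α]

lemma orbit_exists (σ : α → α) (a : α) (htrans : ∀ b, ∃ k, σ^[k] a = b) (b : α) :
    ∃ j < Fintype.card α, σ^[j] a = b := by
  classical
  have hex := htrans b
  set k := Nat.find hex with hk
  have hkspec : σ^[k] a = b := Nat.find_spec hex
  have hinj : Function.Injective (fun i : Fin (k+1) => σ^[(i:ℕ)] a) := by
    have haux : ∀ i j : Fin (k+1), (i:ℕ) ≤ (j:ℕ) → σ^[(i:ℕ)] a = σ^[(j:ℕ)] a → i = j := by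
      intro i j hij heq
      have hjk : (j:ℕ) < k + 1 := j.isLt
      have h1 : σ^[(k - (j:ℕ)) + (i:ℕ)] a = b := by
        rw [Function.iterate_add_apply, heq, ← Function.iterate_add_apply,
          show (k - (j:ℕ)) + (j:ℕ) = k by omega]
        exact hkspec
      have h2 := Nat.find_min' hex h1
      rw [← hk] at h2
      exact Fin.ext (by omega)
    intro i j heq
    rcases le_total (i:ℕ) (j:ℕ) with hle | hle
    · exact haux i j hle heq
    · exact (haux j i hle heq.symm).symm
  have hcard : k + 1 ≤ Fintype.card α := by
    simpa using Fintype.card_le_of_injective _ hinj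
  exact ⟨k, by omega, hkspec⟩

lemma orbit_unique (σ : α → α) (a : α) (htrans : ∀ b, ∃ k, σ^[k] a = b) (b : α) :
    ∃! j, j ∈ Finset.range (Fintype.card α) ∧ σ^[j] a = b := by
  classical
  have hsurj : Function.Surjective (fun i : Fin (Fintype.card α) => σ^[(i:ℕ)] a) := by
    intro c
    obtain ⟨j, hj, hjb⟩ := orbit_exists σ a htrans c
    exact ⟨⟨j, hj⟩, hjb⟩
  have hbij : Function.Bijective (fun i : Fin (Fintype.card α) => σ^[(i:ℕ)] a) := by
    rw [Fintype.bijective_iff_surjective_and_card]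
    exact ⟨hsurj, by simp⟩
  obtain ⟨j, hj, hjb⟩ := orbit_exists σ a htrans b
  refine ⟨j, ⟨Finset.mem_range.2 hj, hjb⟩, ?_⟩
  rintro j' ⟨hj', hj'b⟩
  have heq := hbij.1 (a₁ := ⟨j', Finset.mem_range.1 hj'⟩) (a₂ := ⟨j, hj⟩)
    (by simpa using hj'b.trans hjb.symm)
  simpa [Fin.ext_iff] using heq

lemma orbit_period (σ : α → α) (hσ : Function.Injective σ) (a : α)
    (htrans : ∀ b, ∃ k, σ^[k] a = b) : σ^[Fintype.card α] a = a := by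
  classical
  obtain ⟨j, hj, hjb⟩ := orbit_exists σ a htrans (σ^[Fintype.card α] a)
  rcases Nat.eq_zero_or_pos j with rfl | hjpos
  · simpa using hjb.symm
  · exfalso
    have h1 : σ^[j] (σ^[Fintype.card α - j] a) = σ^[j] a := by
      rw [← Function.iterate_add_apply, show j + (Fintype.card α - j) = Fintype.card α by omega]
      exact hjb.symm
    have h2 : σ^[Fintype.card α - j] a = a := (hσ.iterate j) h1
    obtain ⟨j₀, hspec, huniq⟩ := orbit_unique σ a htrans a
    have hcpos : 0 < Fintype.card α := Fintype.card_pos_iff.mpr ⟨a⟩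
    have e1 := huniq (Fintype.card α - j) ⟨Finset.mem_range.2 (by omega), h2⟩
    have e2 := huniq 0 ⟨Finset.mem_range.2 (by omega), by simp⟩
    omega

lemma orbit_ne (σ : α → α) (a : α) (htrans : ∀ b, ∃ k, σ^[k] a = b)
    {m : ℕ} (hm : 0 < m) (hm2 : m < Fintype.card α) : σ^[m] a ≠ a := by
  intro hcon
  obtain ⟨j₀, hspec, huniq⟩ := orbit_unique σ a htrans a
  have e1 := huniq m ⟨Finset.mem_range.2 hm2, hcon⟩
  have e2 := huniq 0 ⟨Finset.mem_range.2 (by omega), by simp⟩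
  omega

end Orbit

section Sums
variable {f h : ℤ_[2] → ℤ_[2]}

lemma exists_unique_shift (n : ℕ) (c : ℤ_[2]) (b : ZMod (2^n)) :
    ∃! j, j ∈ Finset.range (2^n) ∧ pr n (c + (j:ℤ_[2])) = b := by
  have hval : ∀ j : ℕ, pr n (c + (j:ℤ_[2])) = pr n c + (j : ZMod (2^n)) := by
    intro j
    rw [map_add, map_natCast]
  refine ⟨(b - pr n c).val, ⟨Finset.mem_range.2 (ZMod.val_lt _), ?_⟩, ?_⟩
  · rw [hval, ZMod.natCast_zmod_val]
    ring
  · rintro j ⟨hj, hjb⟩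
    rw [hval] at hjb
    have hcst : (j : ZMod (2^n)) = b - pr n c := by linear_combination hjb
    rw [← hcst, ZMod.val_cast_of_lt (Finset.mem_range.1 hj)]

lemma pr_sum_eq (hh : VDP.IsLip 2 h) (n : ℕ) (u : ℕ → ℤ_[2])
    (hu : ∀ b : ZMod (2^n), ∃! j, j ∈ Finset.range (2^n) ∧ pr n (u j) = b) :
    pr n (∑ j ∈ Finset.range (2^n), h (u j)) = ∑ b : ZMod (2^n), fbar h n b := by
  rw [map_sum]
  refine Finset.sum_bij (fun j _ => pr n (u j)) (fun j _ => Finset.mem_univ _) ?_ ?_ ?_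
  · intro j hj j' hj' heq
    obtain ⟨j₀, -, huniq⟩ := hu (pr n (u j))
    rw [huniq j ⟨hj, rfl⟩, huniq j' ⟨hj', heq.symm⟩]
  · rintro b -
    obtain ⟨j, ⟨hj, hjb⟩, -⟩ := hu b
    exact ⟨j, hj, hjb⟩
  · intro j _
    exact fbar_pr hh (u j)

lemma exists_unique_orbit (hf : VDP.IsLip 2 f) {n : ℕ} (htrans : VDP.TransModPow 2 f n)
    (y : ℤ_[2]) (b : ZMod (2^n)) :
    ∃! j, j ∈ Finset.range (2^n) ∧ pr n (f^[j] y) = b := by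
  have hts : ∀ b' : ZMod (2^n), ∃ k, (fbar f n)^[k] (pr n y) = b' := by
    intro b'
    obtain ⟨k, hk⟩ := htrans y b'
    exact ⟨k, by rw [← fbar_iter hf]; exact hk⟩
  have hcard : Fintype.card (ZMod (2^n)) = 2^n := ZMod.card _
  obtain ⟨j, ⟨hj, hjb⟩, huniq⟩ := orbit_unique (fbar f n) (pr n y) hts b
  rw [Finset.mem_range, hcard] at hj
  refine ⟨j, ⟨Finset.mem_range.2 hj, by rw [fbar_iter hf]; exact hjb⟩, ?_⟩
  rintro j' ⟨hj', hj'b⟩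
  exact huniq j' ⟨Finset.mem_range.2 (by rw [hcard]; exact Finset.mem_range.1 hj'),
    by rw [← fbar_iter hf]; exact hj'b⟩

/-- the partial sums of `h` over an initial segment -/
noncomputable def hS (h : ℤ_[2] → ℤ_[2]) (n : ℕ) : ℤ_[2] :=
  ∑ z ∈ Finset.range (2^n), h (z : ℤ_[2])

lemma sum_orbit_cong (hh : VDP.IsLip 2 h) (hf : VDP.IsLip 2 f) {n : ℕ}
    (htrans : VDP.TransModPow 2 f n) (y : ℤ_[2]) :
    (2:ℤ_[2])^n ∣ (∑ j ∈ Finset.range (2^n), h (f^[j] y)) - hS h n := by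
  rw [← pr_eq_iff, pr_sum_eq hh n _ (exists_unique_orbit hf htrans y), hS]
  have h0 := exists_unique_shift n 0
  simp only [zero_add] at h0
  rw [pr_sum_eq hh n (fun z => (z:ℤ_[2])) h0]

end Sums


section Crit
variable {f h : ℤ_[2] → ℤ_[2]}

lemma iter_formula (hform : ∀ x, f x = 1 + x + 2 * h x) (y : ℤ_[2]) (k : ℕ) :
    f^[k] y = y + (k : ℤ_[2]) + 2 * ∑ j ∈ Finset.range k, h (f^[j] y) := by
  induction k with
  | zero => simp
  | succ k ih =>
    rw [Function.iterate_succ_apply', Finset.sum_range_succ, hform (f^[k] y), ih]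
    push_cast
    ring

lemma key_iter' (hh : VDP.IsLip 2 h) (hf : VDP.IsLip 2 f)
    (hform : ∀ x, f x = 1 + x + 2 * h x) {n : ℕ} (htrans : VDP.TransModPow 2 f n)
    (y : ℤ_[2]) :
    (2:ℤ_[2])^(n+1) ∣ f^[2^n] y - (y + ((2^n : ℕ):ℤ_[2]) + 2 * hS h n) := by
  have e : f^[2^n] y - (y + ((2^n : ℕ):ℤ_[2]) + 2 * hS h n)
      = 2 * ((∑ j ∈ Finset.range (2^n), h (f^[j] y)) - hS h n) := by
    rw [iter_formula hform y (2^n)]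
    ring
  rw [e, pow_succ, mul_comm ((2:ℤ_[2])^n) 2]
  exact mul_dvd_mul_left 2 (sum_orbit_cong hh hf htrans y)

lemma key_iter (hh : VDP.IsLip 2 h) (hf : VDP.IsLip 2 f)
    (hform : ∀ x, f x = 1 + x + 2 * h x) {n : ℕ} (htrans : VDP.TransModPow 2 f n)
    (hdvd : (2:ℤ_[2])^n ∣ hS h n) (y : ℤ_[2]) :
    (2:ℤ_[2])^(n+1) ∣ f^[2^n] y - (y + ((2^n : ℕ):ℤ_[2])) := by
  have h1 := key_iter' hh hf hform htrans y
  have h2 : (2:ℤ_[2])^(n+1) ∣ 2 * hS h n := by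
    rw [pow_succ, mul_comm ((2:ℤ_[2])^n) 2]
    exact mul_dvd_mul_left 2 hdvd
  have e : f^[2^n] y - (y + ((2^n : ℕ):ℤ_[2]))
      = (f^[2^n] y - (y + ((2^n : ℕ):ℤ_[2]) + 2 * hS h n)) + 2 * hS h n := by ring
  rw [e]
  exact dvd_add h1 h2

lemma cast_fiber {n : ℕ} (c a : ZMod (2^(n+1)))
    (hceq : ZMod.castHom (pow_dvd_pow 2 (Nat.le_succ n)) (ZMod (2^n)) c
       = ZMod.castHom (pow_dvd_pow 2 (Nat.le_succ n)) (ZMod (2^n)) a) :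
    c = a ∨ c = a + 2^n := by
  set C := ZMod.castHom (pow_dvd_pow 2 (Nat.le_succ n)) (ZMod (2^n)) with hC
  set d := c - a with hd
  have hd0 : C d = 0 := by rw [hd, map_sub, hceq, sub_self]
  have hdval : d = ((d.val : ℕ) : ZMod (2^(n+1))) := (ZMod.natCast_zmod_val d).symm
  have hzero : ((d.val : ℕ) : ZMod (2^n)) = 0 := by
    have h' := hd0
    rw [hdval, map_natCast] at h'
    exact h'
  rw [ZMod.natCast_eq_zero_iff] at hzero
  have hlt : d.val < 2^(n+1) := ZMod.val_lt d
  obtain ⟨t, ht⟩ := hzero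
  have hpow : (0:ℕ) < 2^n := Nat.pow_pos (by norm_num)
  have h2 : (2:ℕ)^(n+1) = 2^n * 2 := pow_succ 2 n
  have ht2 : t < 2 := by
    apply Nat.lt_of_mul_lt_mul_left (a := 2^n)
    omega
  interval_cases t
  · left
    have hdz : d = 0 := by rw [hdval, ht]; simp
    rw [hd] at hdz
    linear_combination hdz
  · right
    have hd1 : d = ((2^n : ℕ) : ZMod (2^(n+1))) := by rw [hdval, ht]; norm_num
    rw [hd] at hd1
    push_cast at hd1
    linear_combination hd1

lemma trans_zero (f : ℤ_[2] → ℤ_[2]) : VDP.TransModPow 2 f 0 := by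
  intro x a
  refine ⟨0, ?_⟩
  have : ∀ u v : ZMod (2^0), u = v := by decide
  exact this _ _

lemma trans_succ (hh : VDP.IsLip 2 h) (hf : VDP.IsLip 2 f)
    (hform : ∀ x, f x = 1 + x + 2 * h x) {n : ℕ} (htrans : VDP.TransModPow 2 f n)
    (hdvd : (2:ℤ_[2])^n ∣ hS h n) : VDP.TransModPow 2 f (n+1) := by
  intro x a
  obtain ⟨r, hr⟩ := htrans x (ZMod.castHom (pow_dvd_pow 2 (Nat.le_succ n)) (ZMod (2^n)) a)
  set c := pr (n+1) (f^[r] x) with hc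
  have hcast : ZMod.castHom (pow_dvd_pow 2 (Nat.le_succ n)) (ZMod (2^n)) c
      = pr n (f^[r] x) :=
    RingHom.congr_fun (PadicInt.zmod_cast_comp_toZModPow n (n+1) (Nat.le_succ n)) (f^[r] x)
  have hca : ZMod.castHom (pow_dvd_pow 2 (Nat.le_succ n)) (ZMod (2^n)) c
      = ZMod.castHom (pow_dvd_pow 2 (Nat.le_succ n)) (ZMod (2^n)) a := by
    rw [hcast]
    exact hr
  rcases cast_fiber c a hca with he | he
  · exact ⟨r, by rw [pr_toZModPow, ← hc]; exact he⟩
  · refine ⟨2^n + r, ?_⟩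
    rw [pr_toZModPow, Function.iterate_add_apply]
    have hk := key_iter hh hf hform htrans hdvd (f^[r] x)
    have heq : pr (n+1) (f^[2^n] (f^[r] x)) = pr (n+1) (f^[r] x + ((2^n : ℕ):ℤ_[2])) := by
      rw [pr_eq_iff]
      exact hk
    rw [heq, map_add, ← hc, he, map_natCast]
    have hz : ((2^n : ℕ) : ZMod (2^(n+1))) = (2:ZMod (2^(n+1)))^n := by push_cast; ring
    rw [hz]
    have h0 : (2:ZMod (2^(n+1)))^n + 2^n = 0 := by
      have hself := ZMod.natCast_self (2^(n+1))
      push_cast at hself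
      linear_combination hself
    linear_combination h0

lemma form2_to_trans (hf : VDP.IsLip 2 f) {g : ℤ_[2] → ℤ_[2]} (hg : VDP.IsLip 2 g)
    (hform : ∀ x, f x = 1 + x + 2 * (g (x+1) - g x)) :
    ∀ n, VDP.TransModPow 2 f n := by
  have hhl : VDP.IsLip 2 (fun x => g (x+1) - g x) := by
    apply dvd_lip
    intro n x y hxy
    have h1 := lip_dvd hg n (x+1) (y+1) (by
      have e : x + 1 - (y + 1) = x - y := by ring
      rw [e]; exact hxy)
    have h2 := lip_dvd hg n x y hxy
    have e : g (x+1) - g x - (g (y+1) - g y) = (g (x+1) - g (y+1)) - (g x - g y) := by ring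
    rw [e]
    exact dvd_sub h1 h2
  have hform' : ∀ x, f x = 1 + x + 2 * (fun x => g (x+1) - g x) x := hform
  have hSd : ∀ n, (2:ℤ_[2])^n ∣ hS (fun x => g (x+1) - g x) n := by
    intro n
    have htel : hS (fun x => g (x+1) - g x) n = g ((2^n : ℕ):ℤ_[2]) - g ((0:ℕ):ℤ_[2]) := by
      rw [hS, show (∑ z ∈ Finset.range (2^n), (g ((z:ℤ_[2]) + 1) - g (z:ℤ_[2])))
          = ∑ z ∈ Finset.range (2^n), (g (((z+1 : ℕ)):ℤ_[2]) - g ((z:ℕ):ℤ_[2])) from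
        Finset.sum_congr rfl (fun z _ => by push_cast; ring_nf),
        Finset.sum_range_sub (fun z => g ((z:ℕ):ℤ_[2]))]
    rw [htel]
    apply lip_dvd hg
    push_cast
    simp
  intro n
  induction n with
  | zero => exact trans_zero f
  | succ n ih => exact trans_succ hhl hf hform' ih (hSd n)

end Crit

section Reverse
variable {f : ℤ_[2] → ℤ_[2]}

lemma two_dvd_iff (z : ℤ_[2]) : (2:ℤ_[2]) ∣ z ↔ PadicInt.toZMod z = 0 := by
  rw [← RingHom.mem_ker, PadicInt.ker_toZMod, PadicInt.maximalIdeal_eq_span_p,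
    Ideal.mem_span_singleton]
  norm_num

lemma parity_cases (z : ℤ_[2]) : (2:ℤ_[2]) ∣ z ∨ (2:ℤ_[2]) ∣ z - 1 := by
  have h01 : ∀ w : ZMod 2, w = 0 ∨ w = 1 := by decide
  rcases h01 (PadicInt.toZMod z) with h | h
  · left
    exact (two_dvd_iff z).2 h
  · right
    refine (two_dvd_iff _).2 ?_
    rw [map_sub, h, map_one, sub_self]

lemma trans_to_hS (hf : VDP.IsLip 2 f) {h : ℤ_[2] → ℤ_[2]} (hh : VDP.IsLip 2 h)
    (hform : ∀ x, f x = 1 + x + 2 * h x) (htrans : ∀ n, VDP.TransModPow 2 f n)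
    (hbij : ∀ n, Function.Bijective (fbar f n)) (n : ℕ) :
    (2:ℤ_[2])^n ∣ hS h n := by
  set σ := fbar f (n+1) with hσ
  set a := pr (n+1) 0 with ha
  have hts : ∀ b, ∃ k, σ^[k] a = b := fun b => trans_sigma hf (htrans (n+1)) a b
  have hcard : Fintype.card (ZMod (2^(n+1))) = 2^(n+1) := ZMod.card _
  have hper : σ^[2^(n+1)] a = a := by
    have hp := orbit_period σ (hbij (n+1)).1 a hts
    rwa [hcard] at hp
  have hne : σ^[2^n] a ≠ a := by
    refine orbit_ne σ a hts (Nat.pow_pos (by norm_num)) ?_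
    rw [hcard]
    exact Nat.pow_lt_pow_right (by norm_num) (Nat.lt_succ_self n)
  set t := pr (n+1) (((2^n : ℕ):ℤ_[2]) + 2 * hS h n) with ht
  have hshift : ∀ c : ZMod (2^(n+1)), σ^[2^n] c = c + t := by
    intro c
    have hk := key_iter' hh hf hform (htrans n) ((c.val : ℕ) : ℤ_[2])
    have e1 : σ^[2^n] c = pr (n+1) (f^[2^n] ((c.val : ℕ):ℤ_[2])) := by
      rw [fbar_iter hf, pr_natCast_val]
    have e2 : pr (n+1) (f^[2^n] ((c.val : ℕ):ℤ_[2]))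
        = pr (n+1) (((c.val : ℕ):ℤ_[2]) + ((2^n : ℕ):ℤ_[2]) + 2 * hS h n) :=
      pr_eq_iff.2 hk
    rw [e1, e2, map_add, map_add, pr_natCast_val, ht, map_add]
    ring
  have htt : t + t = 0 := by
    have h1 : σ^[2^(n+1)] a = a + t + t := by
      have e0 : σ^[2^(n+1)] a = σ^[2^n + 2^n] a :=
        congrArg (fun m => σ^[m] a) (by rw [pow_succ]; ring)
      rw [e0, Function.iterate_add_apply, hshift, hshift]
    rw [hper] at h1
    linear_combination -h1
  have htne : t ≠ 0 := by
    intro h0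
    apply hne
    rw [hshift a, h0, add_zero]
  have ht2n : t = ((2^n : ℕ) : ZMod (2^(n+1))) := by
    have hd2 : (2:ℕ)^(n+1) ∣ t.val + t.val := by
      rw [← ZMod.natCast_eq_zero_iff]
      push_cast [ZMod.natCast_zmod_val]
      exact htt
    have hlt : t.val < 2^(n+1) := ZMod.val_lt t
    have hv0 : t.val ≠ 0 := by
      intro h0
      apply htne
      rw [← ZMod.natCast_zmod_val t, h0, Nat.cast_zero]
    obtain ⟨q, hq⟩ := hd2
    have hpows : (2:ℕ)^(n+1) = 2 * 2^n := by rw [pow_succ]; ring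
    have hq2 : t.val + t.val = 2 * (2^n * q) := by rw [hq, hpows]; ring
    set R := 2^n * q with hR
    have hqval : t.val = R := by omega
    have hpow : (0:ℕ) < 2^n := Nat.pow_pos (by norm_num)
    have hqlt : q < 2 := by
      apply Nat.lt_of_mul_lt_mul_left (a := 2^n)
      omega
    have hq1 : q = 1 := by
      rcases Nat.eq_zero_or_pos q with rfl | hqpos
      · exfalso
        apply hv0
        simp only [mul_zero] at hR
        omega
      · omega
    rw [← ZMod.natCast_zmod_val t, hqval, hR, hq1, mul_one]
  have hfin : pr (n+1) (2 * hS h n) = 0 := by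
    have e : t = pr (n+1) (((2^n : ℕ)):ℤ_[2]) + pr (n+1) (2 * hS h n) := by
      rw [ht, map_add]
    rw [ht2n, map_natCast] at e
    linear_combination -e
  have hdd : (2:ℤ_[2])^(n+1) ∣ 2 * hS h n := by
    have e := pr_eq_iff.1 (show pr (n+1) (2 * hS h n) = pr (n+1) 0 by rw [hfin, map_zero])
    rwa [sub_zero] at e
  rw [show (2:ℤ_[2])^(n+1) = 2 * 2^n from by rw [pow_succ]; ring,
    mul_dvd_mul_iff_left (two_ne_zero' ℤ_[2])] at hdd
  exact hdd

end Reverse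


section Gconstr
variable {h : ℤ_[2] → ℤ_[2]}

lemma int_dvd_iff (k : ℤ) (n : ℕ) : (2:ℤ_[2])^n ∣ ((k:ℤ):ℤ_[2]) ↔ ((2:ℤ)^n ∣ k) := by
  have hi := PadicInt.norm_int_le_pow_iff_dvd (p := 2) (k := k) (n := n)
  rw [show ((2:ℕ):ℝ) = (2:ℝ) by norm_num] at hi
  rw [← norm_le_iff_dvd, hi]
  constructor
  · intro hd; exact_mod_cast hd
  · intro hd; exact_mod_cast hd

/-- partial sums of h -/
noncomputable def Gp (h : ℤ_[2] → ℤ_[2]) (m : ℕ) : ℤ_[2] := ∑ z ∈ Finset.range m, h (z:ℤ_[2])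

lemma hblock (hh : VDP.IsLip 2 h) (hSd : ∀ n, (2:ℤ_[2])^n ∣ hS h n) (n : ℕ) (c : ℕ) :
    (2:ℤ_[2])^n ∣ ∑ z ∈ Finset.range (2^n), h ((c:ℤ_[2]) + (z:ℤ_[2])) := by
  have e1 := pr_sum_eq hh n (fun z => (c:ℤ_[2]) + (z:ℤ_[2])) (exists_unique_shift n c)
  have h0 := exists_unique_shift n 0
  simp only [zero_add] at h0
  have e2 := pr_sum_eq hh n (fun z => (z:ℤ_[2])) h0
  have e3 : pr n (∑ z ∈ Finset.range (2^n), h ((c:ℤ_[2]) + (z:ℤ_[2]))) = pr n (hS h n) := by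
    rw [e1, hS, ← e2]
  have hd := pr_eq_iff.1 e3
  have := dvd_add hd (hSd n)
  simpa using this

lemma hGd (hh : VDP.IsLip 2 h) (hSd : ∀ n, (2:ℤ_[2])^n ∣ hS h n) (n : ℕ) (a b : ℕ)
    (hab : a ≤ b) (hdvd : (2:ℕ)^n ∣ b - a) : (2:ℤ_[2])^n ∣ Gp h b - Gp h a := by
  obtain ⟨q, hq⟩ := hdvd
  have hb : b = a + 2^n * q := by omega
  subst hb
  clear hab hq
  induction q with
  | zero => simp
  | succ q ih =>
    rw [show a + 2^n*(q+1) = a + 2^n*q + 2^n from by ring]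
    have hstep : (2:ℤ_[2])^n ∣ Gp h (a + 2^n*q + 2^n) - Gp h (a + 2^n*q) := by
      have e : Gp h (a + 2^n*q + 2^n) - Gp h (a + 2^n*q)
          = ∑ z ∈ Finset.range (2^n), h ((((a + 2^n*q : ℕ)):ℤ_[2]) + (z:ℤ_[2])) := by
        rw [Gp, Gp, ← Finset.sum_Ico_eq_sub _ (Nat.le_add_right _ _),
          Finset.sum_Ico_eq_sum_range,
          Nat.add_sub_cancel_left]
        apply Finset.sum_congr rfl
        intro z _
        push_cast
        ring_nf
      rw [e]
      exact hblock hh hSd n (a + 2^n*q)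
    have e2 : Gp h (a + 2^n*q + 2^n) - Gp h a
        = (Gp h (a + 2^n*q + 2^n) - Gp h (a + 2^n*q)) + (Gp h (a + 2^n*q) - Gp h a) := by
      ring
    rw [e2]
    exact dvd_add hstep ih

lemma hGd' (hh : VDP.IsLip 2 h) (hSd : ∀ n, (2:ℤ_[2])^n ∣ hS h n) (n : ℕ) (a b : ℕ)
    (hdvd : (2:ℤ_[2])^n ∣ ((b:ℤ_[2]) - (a:ℤ_[2]))) : (2:ℤ_[2])^n ∣ Gp h b - Gp h a := by
  have hnat : ∀ (a b : ℕ), a ≤ b → (2:ℤ_[2])^n ∣ ((b:ℤ_[2]) - (a:ℤ_[2])) → (2:ℕ)^n ∣ b - a := by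
    intro a b hab hd
    have h2 : ((b:ℤ_[2]) - a) = ((((b:ℤ) - a : ℤ)):ℤ_[2]) := by push_cast; ring
    rw [h2, int_dvd_iff] at hd
    have h3 : ((2:ℤ)^n) ∣ ((b - a : ℕ) : ℤ) := by
      rw [Nat.cast_sub hab]
      exact_mod_cast hd
    exact_mod_cast h3
  rcases le_total a b with hab | hab
  · exact hGd hh hSd n a b hab (hnat a b hab hdvd)
  · have hd' : (2:ℤ_[2])^n ∣ ((a:ℤ_[2]) - (b:ℤ_[2])) := by
      have e : ((a:ℤ_[2]) - b) = -((b:ℤ_[2]) - a) := by ring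
      rw [e]
      exact dvd_neg.2 hdvd
    have := hGd hh hSd n b a hab (hnat b a hab hd')
    have e : Gp h b - Gp h a = -(Gp h a - Gp h b) := by ring
    rw [e]
    exact dvd_neg.2 this

lemma happr (x : ℤ_[2]) (k : ℕ) : (2:ℤ_[2])^k ∣ x - ((x.appr k : ℕ):ℤ_[2]) := by
  have hs := PadicInt.appr_spec k x
  rw [Ideal.mem_span_singleton] at hs
  exact_mod_cast hs

lemma exists_g (hh : VDP.IsLip 2 h) (hSd : ∀ n, (2:ℤ_[2])^n ∣ hS h n) :
    ∃ g : ℤ_[2] → ℤ_[2], VDP.IsLip 2 g ∧ ∀ x, h x = g (x+1) - g x := by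
  have hcau : ∀ x : ℤ_[2], CauchySeq (fun k => Gp h (x.appr k)) := by
    intro x
    rw [Metric.cauchySeq_iff']
    intro ε hε
    obtain ⟨N, hN⟩ := PadicInt.exists_pow_neg_lt 2 hε
    refine ⟨N, fun m hm => ?_⟩
    rw [dist_eq_norm]
    calc ‖Gp h (x.appr m) - Gp h (x.appr N)‖ ≤ (2:ℝ)^(-(N:ℤ)) := by
          rw [norm_le_iff_dvd]
          apply hGd' hh hSd N
          have h1 := happr x m
          have h2 := happr x N
          have e : ((x.appr m : ℕ):ℤ_[2]) - ((x.appr N : ℕ):ℤ_[2])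
              = (x - ((x.appr N : ℕ):ℤ_[2])) - (x - ((x.appr m : ℕ):ℤ_[2])) := by ring
          rw [e]
          exact dvd_sub h2 (dvd_trans (pow_dvd_pow 2 hm) h1)
    _ < ε := by exact_mod_cast hN
  set g : ℤ_[2] → ℤ_[2] := fun x => (cauchySeq_tendsto_of_complete (hcau x)).choose with hgdef
  have hgt : ∀ x, Filter.Tendsto (fun k => Gp h (x.appr k)) Filter.atTop (nhds (g x)) :=
    fun x => (cauchySeq_tendsto_of_complete (hcau x)).choose_spec
  have hclosed : ∀ n : ℕ, IsClosed {z : ℤ_[2] | (2:ℤ_[2])^n ∣ z} := by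
    intro n
    have e : {z : ℤ_[2] | (2:ℤ_[2])^n ∣ z} = Metric.closedBall 0 ((2:ℝ)^(-(n:ℤ))) := by
      ext z
      rw [Metric.mem_closedBall, dist_eq_norm, sub_zero, Set.mem_setOf_eq, norm_le_iff_dvd]
    rw [e]
    exact Metric.isClosed_closedBall
  have hgdvd : ∀ (n : ℕ) (x y : ℤ_[2]), (2:ℤ_[2])^n ∣ x - y → (2:ℤ_[2])^n ∣ g x - g y := by
    intro n x y hxy
    have htd : Filter.Tendsto (fun k => Gp h (x.appr k) - Gp h (y.appr k)) Filter.atTop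
        (nhds (g x - g y)) := (hgt x).sub (hgt y)
    apply (hclosed n).mem_of_tendsto htd
    filter_upwards [Filter.eventually_ge_atTop n] with k hk
    show (2:ℤ_[2])^n ∣ Gp h (x.appr k) - Gp h (y.appr k)
    apply hGd' hh hSd n
    have e : ((x.appr k : ℕ):ℤ_[2]) - ((y.appr k : ℕ):ℤ_[2])
        = ((x - y) - (x - ((x.appr k : ℕ):ℤ_[2]))) + (y - ((y.appr k : ℕ):ℤ_[2])) := by ring
    rw [e]
    exact dvd_add (dvd_sub hxy (dvd_trans (pow_dvd_pow 2 hk) (happr x k)))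
      (dvd_trans (pow_dvd_pow 2 hk) (happr y k))
  have hglip : VDP.IsLip 2 g := dvd_lip hgdvd
  have hgnat : ∀ m : ℕ, g ((m:ℕ):ℤ_[2]) = Gp h m := by
    intro m
    apply tendsto_nhds_unique (hgt ((m:ℕ):ℤ_[2]))
    rw [Metric.tendsto_atTop]
    intro ε hε
    obtain ⟨N, hN⟩ := PadicInt.exists_pow_neg_lt 2 hε
    refine ⟨N, fun k hk => ?_⟩
    rw [dist_eq_norm]
    calc ‖Gp h (((m:ℕ):ℤ_[2]).appr k) - Gp h m‖ ≤ (2:ℝ)^(-(N:ℤ)) := by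
          rw [norm_le_iff_dvd]
          apply hGd' hh hSd N
          have hap := happr ((m:ℕ):ℤ_[2]) k
          have e : (((((m:ℕ):ℤ_[2]).appr k : ℕ)):ℤ_[2]) - ((m:ℕ):ℤ_[2])
              = -(((m:ℕ):ℤ_[2]) - (((((m:ℕ):ℤ_[2]).appr k : ℕ)):ℤ_[2])) := by ring
          rw [e]
          exact dvd_neg.2 (dvd_trans (pow_dvd_pow 2 hk) hap)
    _ < ε := by exact_mod_cast hN
  have hfun : h = fun x => g (x+1) - g x := by
    have hc1 : Continuous (fun x : ℤ_[2] => g (x+1) - g x) :=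
      ((lip_continuous hglip).comp (continuous_id.add continuous_const)).sub
        (lip_continuous hglip)
    have hc2 : Continuous h := lip_continuous hh
    apply (PadicInt.denseRange_natCast (p := 2)).equalizer hc2 hc1
    funext m
    show h ((m:ℕ):ℤ_[2]) = g (((m:ℕ):ℤ_[2]) + 1) - g ((m:ℕ):ℤ_[2])
    have e1 : (((m:ℕ):ℤ_[2]) + 1) = (((m+1 : ℕ)):ℤ_[2]) := by push_cast; ring
    rw [e1, hgnat (m+1), hgnat m, Gp, Gp, Finset.sum_range_succ]
    ring
  exact ⟨g, hglip, fun x => by rw [hfun]⟩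

end Gconstr


lemma trans_to_form2 {f : ℤ_[2] → ℤ_[2]} (hf : VDP.IsLip 2 f)
    (htrans : ∀ n, VDP.TransModPow 2 f n) :
    ∃ g : ℤ_[2] → ℤ_[2], VDP.IsLip 2 g ∧ ∀ x, f x = 1 + x + 2 * (g (x+1) - g x) := by
  have hbij := trans_to_bij hf htrans
  obtain ⟨d, g₀, hg₀, hform₀⟩ := bij_to_form hf hbij
  have hd : (2:ℤ_[2]) ∣ d - 1 := by
    rcases parity_cases d with h2d | h2d
    · exfalso
      have hpar : ∀ (k : ℕ) (x : ℤ_[2]), pr 1 (f^[k] x) = pr 1 x := by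
        intro k x
        induction k with
        | zero => rfl
        | succ k ih =>
          rw [Function.iterate_succ_apply', ← ih]
          rw [pr_eq_iff]
          have e : f (f^[k] x) - f^[k] x = d + 2 * g₀ (f^[k] x) := by
            rw [hform₀]; ring
          rw [e, pow_one]
          exact dvd_add h2d (Dvd.intro _ rfl)
      obtain ⟨k, hk⟩ := htrans 1 0 (pr 1 0 + 1)
      rw [pr_toZModPow, hpar] at hk
      rw [left_eq_add] at hk
      exact (by decide : (1 : ZMod (2^1)) ≠ 0) hk
    · exact h2d
  obtain ⟨e, he⟩ := hd
  have hform : ∀ x, f x = 1 + x + 2 * (fun x => e + g₀ x) x := by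
    intro x
    rw [hform₀ x]
    simp only
    linear_combination he
  have hh : VDP.IsLip 2 (fun x => e + g₀ x) := by
    intro x y
    have eq1 : (fun x => e + g₀ x) x - (fun x => e + g₀ x) y = g₀ x - g₀ y := by
      simp only
      ring
    rw [eq1]
    exact hg₀ x y
  have hSd := trans_to_hS hf hh hform htrans hbij
  obtain ⟨g, hg, hgΔ⟩ := exists_g hh hSd
  refine ⟨g, hg, fun x => ?_⟩
  rw [← hgΔ x]
  exact hform x

end S17

open VDP MeasureTheory in
theorem stmt17 (f : ℤ_[2] → ℤ_[2]) (hf : IsLip 2 f) :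
    (MeasurePreserving f (haarZp 2) (haarZp 2) ↔
      ∃ (d : ℤ_[2]) (g : ℤ_[2] → ℤ_[2]), IsLip 2 g ∧
        ∀ x, f x = d + x + 2 * g x) ∧
    (Ergodic f (haarZp 2) ↔
      ∃ g : ℤ_[2] → ℤ_[2], IsLip 2 g ∧
        ∀ x, f x = 1 + x + 2 * (g (x + 1) - g x)) := by
  constructor
  · constructor
    · intro hmp
      exact S17.bij_to_form hf (S17.mp_to_bij hf hmp)
    · rintro ⟨d, g, hg, hform⟩
      exact S17.bij_to_mp hf (S17.form_to_bij hf hg hform)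
  · constructor
    · intro herg
      exact S17.trans_to_form2 hf (S17.ergodic_to_trans hf herg)
    · rintro ⟨g, hg, hform⟩
      exact S17.trans_to_ergodic hf (S17.form2_to_trans hf hg hform)
end
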